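/- arXiv:2001.06621 — 10 statements merged into one kernel-verified Lean document; each statement's English description precedes it below -/
import Mathlib

section
/- Let d be a derivation of the Lie algebra 𝔪₀ (with basis e₁, e₂, e₃, … and brackets [eᵢ, e₁] = e_{i+1} for i ≥ 2, all other brackets of basis elements zero). Then there exist scalars α₁, …, α_t and β₂, …, β_t such that d(e₁) = Σ_{i=1}^{t} αᵢ eᵢ and d(e_k) = ((k−2)α₁ + β₂) e_k + Σ_{i=3}^{t} βᵢ e_{i+k−2} for all k ≥ 2. -/
open Finset

lemma repr_aux {L : Type*} [AddCommGroup L] [Module ℂ L] (e : ℕ → L)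
    (hspan : Submodule.span ℂ (Set.range (fun i : {n : ℕ // 1 ≤ n} => e i.1)) = ⊤)
    (x : L) : ∃ (N : ℕ) (c : ℕ → ℂ), (x = ∑ i ∈ Finset.Icc 1 N, c i • e i) ∧
      ∀ i, i ∉ Finset.Icc 1 N → c i = 0 := by
  have hx : x ∈ Submodule.span ℂ (Set.range (fun i : {n : ℕ // 1 ≤ n} => e i.1)) := by
    rw [hspan]; trivial
  rw [Finsupp.mem_span_range_iff_exists_finsupp] at hx
  obtain ⟨c, hc⟩ := hx
  set N := c.support.sup (fun i => i.1) with hN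
  set C : ℕ → ℂ := fun n => if h : 1 ≤ n then c ⟨n, h⟩ else 0 with hC
  have hCzero : ∀ i, i ∉ Finset.Icc 1 N → C i = 0 := by
    intro i hi
    simp only [Finset.mem_Icc, not_and, not_le] at hi
    by_cases h1 : 1 ≤ i
    · have : N < i := hi h1
      simp only [hC, dif_pos h1]
      by_contra hne
      have hmem : (⟨i, h1⟩ : {n : ℕ // 1 ≤ n}) ∈ c.support := Finsupp.mem_support_iff.mpr hne
      have hle : i ≤ N := Finset.le_sup (f := fun i : {n : ℕ // 1 ≤ n} => i.1) hmem
      omega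
    · simp [hC, h1]
  refine ⟨N, C, ?_, hCzero⟩
  rw [← hc, Finsupp.sum]
  have himg : c.support.image (fun i : {n : ℕ // 1 ≤ n} => i.1) ⊆ Finset.Icc 1 N := by
    intro i hi
    simp only [Finset.mem_image] at hi
    obtain ⟨j, hj, rfl⟩ := hi
    exact Finset.mem_Icc.mpr ⟨j.2, Finset.le_sup (f := fun i : {n : ℕ // 1 ≤ n} => i.1) hj⟩
  have := Finset.sum_subset himg (f := fun i => C i • e i) ?_
  · rw [← this, Finset.sum_image (by intro x _ y _ h; exact Subtype.coe_injective h)]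
    apply Finset.sum_congr rfl
    intro i _
    simp [hC, i.2]
  · intro i _ hnot
    by_cases h1 : 1 ≤ i
    · have : c ⟨i, h1⟩ = 0 := by
        by_contra hne
        exact hnot (Finset.mem_image.mpr ⟨⟨i, h1⟩, Finsupp.mem_support_iff.mpr hne, rfl⟩)
      simp [hC, h1, this]
    · simp [hC, h1]

lemma my_sum_lie {L : Type*} [LieRing L] {ι : Type*} (s : Finset ι) (f : ι → L) (y : L) :
    ⁅∑ i ∈ s, f i, y⁆ = ∑ i ∈ s, ⁅f i, y⁆ := by
  classical
  induction s using Finset.induction_on with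
  | empty => simp
  | insert _ _ h ih => rw [Finset.sum_insert h, add_lie, ih, Finset.sum_insert h]

lemma my_lie_sum {L : Type*} [LieRing L] {ι : Type*} (s : Finset ι) (f : ι → L) (x : L) :
    ⁅x, ∑ i ∈ s, f i⁆ = ∑ i ∈ s, ⁅x, f i⁆ := by
  classical
  induction s using Finset.induction_on with
  | empty => simp
  | insert _ _ h ih => rw [Finset.sum_insert h, lie_add, ih, Finset.sum_insert h]

/-- Every derivation of the Lie algebra 𝔪₀ (basis e₁, e₂, …, with
⁅eᵢ, e₁⁆ = e_{i+1} for i ≥ 2 and all other brackets of basis elements zero) has the form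
d(e₁) = Σ_{i=1}^t αᵢ eᵢ, d(e_k) = ((k−2)α₁ + β₂) e_k + Σ_{i=3}^t βᵢ e_{i+k−2} for k ≥ 2. -/
theorem m0_derivation_form
    (L : Type*) [LieRing L] [LieAlgebra ℂ L] (e : ℕ → L)
    (hind : LinearIndependent ℂ (fun i : {n : ℕ // 1 ≤ n} => e i.1))
    (hspan : Submodule.span ℂ (Set.range (fun i : {n : ℕ // 1 ≤ n} => e i.1)) = ⊤)
    (hbr : ∀ i, 2 ≤ i → ⁅e i, e 1⁆ = e (i + 1))
    (hzero : ∀ i j, 1 ≤ i → 1 ≤ j → i ≠ 1 → j ≠ 1 → ⁅e i, e j⁆ = 0)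
    (d : Module.End ℂ L)
    (hd : ∀ a b : L, d ⁅a, b⁆ = ⁅d a, b⁆ + ⁅a, d b⁆) :
    ∃ (t : ℕ) (α β : ℕ → ℂ),
      d (e 1) = ∑ i ∈ Finset.Icc 1 t, α i • e i ∧
      ∀ k, 2 ≤ k →
        d (e k) = (((k : ℂ) - 2) * α 1 + β 2) • e k
          + ∑ i ∈ Finset.Icc 3 t, β i • e (i + k - 2) := by
  obtain ⟨N₁, a, ha, ha0⟩ := repr_aux e hspan (d (e 1))
  obtain ⟨N₂, c, hc, hc0⟩ := repr_aux e hspan (d (e 2))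
  set t := max (max N₁ N₂) 2 with ht
  have ht2 : 2 ≤ t := le_max_right _ _
  have ha' : d (e 1) = ∑ i ∈ Finset.Icc 1 t, a i • e i := by
    rw [ha]
    apply Finset.sum_subset
    · apply Finset.Icc_subset_Icc_right; omega
    · intro i _ hni; rw [ha0 i hni, zero_smul]
  have hc' : d (e 2) = ∑ i ∈ Finset.Icc 1 t, c i • e i := by
    rw [hc]
    apply Finset.sum_subset
    · apply Finset.Icc_subset_Icc_right; omega
    · intro i _ hni; rw [hc0 i hni, zero_smul]
  have he4 : e 4 ≠ 0 := by
    simpa using hind.ne_zero ⟨4, by norm_num⟩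
  have hde3 : d (e 3) = ⁅d (e 2), e 1⁆ + ⁅e 2, d (e 1)⁆ := by
    rw [← hbr 2 le_rfl, hd]
  have h32 : ⁅d (e 3), e 2⁆ = 0 := by
    rw [hde3, add_lie]
    have h1 : ⁅(⁅d (e 2), e 1⁆ : L), e 2⁆ = 0 := by
      rw [hc', my_sum_lie, my_sum_lie]
      apply Finset.sum_eq_zero
      intro i hi
      rw [Finset.mem_Icc] at hi
      rw [smul_lie, smul_lie]
      by_cases h2 : 2 ≤ i
      · rw [hbr i h2, hzero (i+1) 2 (by omega) (by omega) (by omega) (by omega), smul_zero]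
      · have hi1 : i = 1 := by omega
        subst hi1
        rw [lie_self, zero_lie, smul_zero]
    have h2 : ⁅(⁅e 2, d (e 1)⁆ : L), e 2⁆ = 0 := by
      rw [ha', my_lie_sum, my_sum_lie]
      apply Finset.sum_eq_zero
      intro i hi
      rw [Finset.mem_Icc] at hi
      rw [lie_smul, smul_lie]
      by_cases h2 : 2 ≤ i
      · rw [hzero 2 i (by omega) (by omega) (by omega) (by omega), zero_lie, smul_zero]
      · have hi1 : i = 1 := by omega
        subst hi1
        rw [hbr 2 le_rfl, hzero 3 2 (by omega) (by omega) (by omega) (by omega), smul_zero]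
    rw [h1, h2, add_zero]
  have hc1 : c 1 = 0 := by
    have h0 := hd (e 3) (e 2)
    rw [hzero 3 2 (by omega) (by omega) (by omega) (by omega), map_zero, h32, zero_add] at h0
    have hlie : ⁅e 3, d (e 2)⁆ = c 1 • e 4 := by
      rw [hc', my_lie_sum]
      rw [Finset.sum_eq_single 1]
      · rw [lie_smul, hbr 3 (by omega)]
      · intro i hi hne
        rw [Finset.mem_Icc] at hi
        rw [lie_smul, hzero 3 i (by omega) (by omega) (by omega) hne, smul_zero]
      · intro h1
        exact absurd (Finset.mem_Icc.mpr ⟨le_rfl, by omega⟩) h1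
    rw [hlie] at h0
    rcases smul_eq_zero.mp h0.symm with h | h
    · exact h
    · exact absurd h he4
  have key : ∀ k, 2 ≤ k → d (e k) = (((k:ℂ) - 2) * a 1 + c 2) • e k
      + ∑ i ∈ Finset.Icc 3 t, c i • e (i + k - 2) := by
    intro k hk
    induction k, hk using Nat.le_induction with
    | base =>
      have hsplit : Finset.Icc 1 t = insert 1 (insert 2 (Finset.Icc 3 t)) := by
        ext x
        simp only [Finset.mem_Icc, Finset.mem_insert]
        omega
      rw [hc', hsplit, Finset.sum_insert (by simp), Finset.sum_insert (by simp)]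
      rw [hc1, zero_smul, zero_add]
      have h22 : (((2:ℕ):ℂ) - 2) * a 1 + c 2 = c 2 := by norm_num
      rw [h22]
      simp
    | succ k hk ih =>
      have hdk : d (e (k+1)) = ⁅d (e k), e 1⁆ + ⁅e k, d (e 1)⁆ := by
        rw [← hbr k hk, hd]
      rw [hdk, ih, ha', add_lie, smul_lie, my_sum_lie, hbr k hk]
      have hsum1 : ∑ i ∈ Finset.Icc 3 t, ⁅c i • e (i + k - 2), e 1⁆
          = ∑ i ∈ Finset.Icc 3 t, c i • e (i + (k+1) - 2) := by
        apply Finset.sum_congr rfl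
        intro i hi
        rw [Finset.mem_Icc] at hi
        rw [smul_lie, hbr (i + k - 2) (by omega)]
        congr 2
        omega
      have hsum2 : ⁅e k, ∑ i ∈ Finset.Icc 1 t, a i • e i⁆ = a 1 • e (k+1) := by
        rw [my_lie_sum, Finset.sum_eq_single 1]
        · rw [lie_smul, hbr k hk]
        · intro i hi hne
          rw [Finset.mem_Icc] at hi
          rw [lie_smul, hzero k i (by omega) (by omega) (by omega) hne, smul_zero]
        · intro h1
          exact absurd (Finset.mem_Icc.mpr ⟨le_rfl, by omega⟩) h1
      rw [hsum1, hsum2]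
      have hcoef : ((↑(k+1):ℂ) - 2) * a 1 + c 2 = (((k:ℂ) - 2) * a 1 + c 2) + a 1 := by
        push_cast
        ring
      rw [hcoef]
      module
  refine ⟨t, a, c, ha', ?_⟩
  intro k hk
  exact key k hk
end

section
/- The Lie algebra 𝔪₀ is residually nilpotent: the intersection of the terms of its lower central series is zero, i.e. ⋂_{i≥1} 𝔪₀^i = 0, where 𝔪₀^1 = 𝔪₀ and 𝔪₀^{k+1} = [𝔪₀^k, 𝔪₀]. -/
/-- The Lie algebra 𝔪₀ is residually nilpotent:
⋂_{i≥1} 𝔪₀^i = 0 for the lower central series.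
(Here `LieModule.lowerCentralSeries ℂ L L k` is the paper's L^{k+1}, with L^1 = L.) -/
theorem m0_residually_nilpotent
    (L : Type*) [LieRing L] [LieAlgebra ℂ L] (e : ℕ → L)
    (hind : LinearIndependent ℂ (fun i : {n : ℕ // 1 ≤ n} => e i.1))
    (hspan : Submodule.span ℂ (Set.range (fun i : {n : ℕ // 1 ≤ n} => e i.1)) = ⊤)
    (hbr : ∀ i, 2 ≤ i → ⁅e i, e 1⁆ = e (i + 1))
    (hzero : ∀ i j, 1 ≤ i → 1 ≤ j → i ≠ 1 → j ≠ 1 → ⁅e i, e j⁆ = 0) :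
    ⨅ k : ℕ, LieModule.lowerCentralSeries ℂ L L k = ⊥ := by
  -- the "tail" spans
  set S : ℕ → Submodule ℂ L := fun m => Submodule.span ℂ (e '' {i | m ≤ i}) with hS
  have hrange : Set.range (fun i : {n : ℕ // 1 ≤ n} => e i.1) = e '' {i | 1 ≤ i} := by
    ext x
    constructor
    · rintro ⟨⟨i, hi⟩, rfl⟩; exact ⟨i, hi, rfl⟩
    · rintro ⟨i, hi, rfl⟩; exact ⟨⟨i, hi⟩, rfl⟩
  have hS1 : S 1 = ⊤ := by
    show Submodule.span ℂ (e '' {i | 1 ≤ i}) = ⊤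
    rw [← hrange, hspan]
  -- the key bracket computation
  have hgen : ∀ (k : ℕ) (j i : ℕ), 1 ≤ j → k + 1 ≤ i → ⁅e j, e i⁆ ∈ S (k + 2) := by
    intro k j i hj hi
    rcases eq_or_lt_of_le hj with hj1 | hj2
    · -- j = 1
      rcases eq_or_lt_of_le (Nat.one_le_iff_ne_zero.mpr (by omega : i ≠ 0)) with hi1 | hi2
      · rw [← hj1, ← hi1]
        simp
      · have : ⁅e 1, e i⁆ = -e (i + 1) := by
          rw [← lie_skew, hbr i hi2]
        rw [← hj1, this]
        exact neg_mem (Submodule.subset_span ⟨i + 1, by simp; omega, rfl⟩)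
    · -- j ≥ 2
      rcases eq_or_lt_of_le hi with hik | hi2
      · -- i = k + 1; need i could be 1 only if k = 0
        by_cases hi1 : i = 1
        · rw [hi1, hbr j hj2]
          exact Submodule.subset_span ⟨j + 1, by simp; omega, rfl⟩
        · rw [hzero j i (by omega) (by omega) (by omega) hi1]
          exact zero_mem _
      · by_cases hi1 : i = 1
        · rw [hi1, hbr j hj2]
          exact Submodule.subset_span ⟨j + 1, by simp; omega, rfl⟩
        · rw [hzero j i (by omega) (by omega) (by omega) hi1]
          exact zero_mem _
  -- bracket of anything with S (k+1) lands in S (k+2)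
  have hbrk : ∀ (k : ℕ) (x n : L), n ∈ S (k + 1) → ⁅x, n⁆ ∈ S (k + 2) := by
    intro k x n hn
    have hx : x ∈ S 1 := hS1 ▸ Submodule.mem_top
    induction hn using Submodule.span_induction with
    | mem n hn =>
      obtain ⟨i, hi, rfl⟩ := hn
      induction hx using Submodule.span_induction with
      | mem x hx =>
        obtain ⟨j, hj, rfl⟩ := hx
        exact hgen k j i hj hi
      | zero => simp
      | add x y _ _ hx hy => rw [add_lie]; exact add_mem hx hy
      | smul c x _ hx => rw [smul_lie]; exact Submodule.smul_mem _ c hx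
    | zero => simp
    | add a b _ _ ha hb => rw [lie_add]; exact add_mem ha hb
    | smul c a _ ha => rw [lie_smul]; exact Submodule.smul_mem _ c ha
  -- lower central series is contained in the tails
  have hlcs : ∀ k : ℕ, ∀ x ∈ LieModule.lowerCentralSeries ℂ L L k, x ∈ S (k + 1) := by
    intro k
    induction k with
    | zero => intro x _; rw [hS1]; trivial
    | succ k ih =>
      intro x hx
      rw [LieModule.lowerCentralSeries_succ, ← LieSubmodule.mem_toSubmodule,
        LieSubmodule.lieIdeal_oper_eq_linear_span'] at hx
      induction hx using Submodule.span_induction with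
      | mem m hm =>
        obtain ⟨y, -, n, hn, rfl⟩ := hm
        exact hbrk k y n (ih n hn)
      | zero => exact zero_mem _
      | add a b _ _ ha hb => exact add_mem ha hb
      | smul c a _ ha => exact Submodule.smul_mem _ c ha
  -- conclude using the basis
  have hspan' : ⊤ ≤ Submodule.span ℂ (Set.range (fun i : {n : ℕ // 1 ≤ n} => e i.1)) :=
    hspan.ge
  let b : Module.Basis {n : ℕ // 1 ≤ n} ℂ L := Module.Basis.mk hind hspan'
  have hb : ∀ i : {n : ℕ // 1 ≤ n}, b i = e i.1 := fun i => Module.Basis.mk_apply hind hspan' i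
  rw [eq_bot_iff]
  intro x hx
  have hx' : ∀ k : ℕ, x ∈ S (k + 1) := by
    intro k
    exact hlcs k x ((LieSubmodule.mem_iInf _).mp hx k)
  have hsupp : ∀ k : ℕ, ↑(b.repr x).support ⊆ {i : {n : ℕ // 1 ≤ n} | k + 1 ≤ i.1} := by
    intro k
    rw [← b.mem_span_image]
    have himg : b '' {i : {n : ℕ // 1 ≤ n} | k + 1 ≤ i.1} = e '' {i | k + 1 ≤ i} := by
      ext y
      constructor
      · rintro ⟨⟨i, hi1⟩, hik, rfl⟩; exact ⟨i, hik, (hb ⟨i, hi1⟩).symm⟩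
      · rintro ⟨i, hik, rfl⟩
        have hik' : k + 1 ≤ i := hik
        exact ⟨⟨i, by omega⟩, hik', hb ⟨i, by omega⟩⟩
    rw [himg]
    exact hx' k
  have hzero' : b.repr x = 0 := by
    ext i
    by_contra h
    have hi : i ∈ (b.repr x).support := Finsupp.mem_support_iff.mpr h
    have := hsupp i.1 hi
    simp only [Set.mem_setOf_eq] at this
    omega
  have : x = 0 := by
    have := congrArg (b.repr.symm) hzero'
    simpa using this
  simp [this]
end

section
/- For the Lie algebra 𝔪₀, the quotient L¹/L² of the lower central series is 2-dimensional, and L^i/L^{i+1} is 1-dimensional for every i ≥ 2. -/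
open Submodule Cardinal

section helpers

universe v w

/-- Rank of a quotient by the span of a subset of a basis. -/
lemma rank_quotient_span_image_basis {K : Type*} {M : Type v} {ι : Type w}
    [Field K] [AddCommGroup M] [Module K M]
    (B : Module.Basis ι K M) (s : Set ι) :
    Cardinal.lift.{w} (Module.rank K (M ⧸ Submodule.span K (B '' s)))
      = Cardinal.lift.{v} #(↥(sᶜ)) := by
  set N := Submodule.span K (B '' s) with hNdef
  have hli : LinearIndependent K (fun i : ↥(sᶜ) => B i) :=
    B.linearIndependent.comp _ Subtype.val_injective
  set W := Submodule.span K (Set.range (fun i : ↥(sᶜ) => B i)) with hWdef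
  have hW : W = Submodule.span K (B '' sᶜ) := by rw [Set.image_eq_range]
  have hdisj : Disjoint N W := by
    rw [hW]
    exact B.linearIndependent.disjoint_span_image disjoint_compl_right
  have hsup : N ⊔ W = ⊤ := by
    rw [hW, ← Submodule.span_union, ← Set.image_union, Set.union_compl_self, Set.image_univ,
      B.span_eq]
  let f : W →ₗ[K] (M ⧸ N) := N.mkQ.comp W.subtype
  have hinj : Function.Injective f := by
    rw [← LinearMap.ker_eq_bot]
    ext ⟨x, hx⟩
    simp only [LinearMap.mem_ker, f, LinearMap.comp_apply, Submodule.mkQ_apply,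
      Submodule.Quotient.mk_eq_zero, Submodule.coe_subtype, Submodule.mem_bot]
    exact ⟨fun hxN => Subtype.ext (Submodule.disjoint_def.mp hdisj x hxN hx),
      fun h => by rw [show x = 0 from congrArg Subtype.val h]; exact N.zero_mem⟩
  have hsurj : Function.Surjective f := by
    intro y
    obtain ⟨x, rfl⟩ := N.mkQ_surjective y
    have hx : x ∈ N ⊔ W := hsup ▸ Submodule.mem_top
    obtain ⟨n, hn, w, hw, rfl⟩ := Submodule.mem_sup.mp hx
    refine ⟨⟨w, hw⟩, ?_⟩
    simp only [f, LinearMap.comp_apply, Submodule.coe_subtype, Submodule.mkQ_apply]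
    rw [Submodule.Quotient.mk_add, (Submodule.Quotient.mk_eq_zero _).mpr hn, zero_add]
  have e1 : W ≃ₗ[K] (M ⧸ N) := LinearEquiv.ofBijective f ⟨hinj, hsurj⟩
  rw [← e1.rank_eq]
  exact ((Module.Basis.span hli).mk_eq_rank).symm

/-- Bracket of the full algebra with the span of the `e n`, `n ≥ m`. -/
lemma m0_bracket_aux {L : Type*} [LieRing L] [LieAlgebra ℂ L] (e : ℕ → L)
    (hspan' : Submodule.span ℂ (e '' {n : ℕ | 1 ≤ n}) = ⊤)
    (hbr : ∀ i, 2 ≤ i → ⁅e i, e 1⁆ = e (i + 1))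
    (hzero : ∀ i j, 1 ≤ i → 1 ≤ j → i ≠ 1 → j ≠ 1 → ⁅e i, e j⁆ = 0)
    (m : ℕ) (hm : 1 ≤ m) (N : LieSubmodule ℂ L L)
    (hN : N.toSubmodule = Submodule.span ℂ (e '' {n : ℕ | m ≤ n})) :
    (⁅(⊤ : LieIdeal ℂ L), N⁆ : LieSubmodule ℂ L L).toSubmodule
      = Submodule.span ℂ (e '' {n : ℕ | max (m + 1) 3 ≤ n}) := by
  have hbr1 : ∀ j, 2 ≤ j → ⁅e 1, e j⁆ = -e (j + 1) := by
    intro j hj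
    rw [← lie_skew, hbr j hj]
  have hmem : ∀ k m', m' ≤ k → e k ∈ Submodule.span ℂ (e '' {n : ℕ | m' ≤ n}) :=
    fun k m' hk => Submodule.subset_span ⟨k, hk, rfl⟩
  rw [LieSubmodule.lieIdeal_oper_eq_linear_span']
  apply le_antisymm
  · rw [Submodule.span_le]
    rintro _ ⟨x, -, n, hn, rfl⟩
    have hn' : n ∈ Submodule.span ℂ (e '' {n : ℕ | m ≤ n}) := by
      rw [← hN]; exact hn
    clear hn
    have key : ∀ j, m ≤ j → ∀ x : L,
        ⁅x, e j⁆ ∈ Submodule.span ℂ (e '' {n : ℕ | max (m + 1) 3 ≤ n}) := by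
      intro j hj x
      have hx : x ∈ Submodule.span ℂ (e '' {n : ℕ | 1 ≤ n}) := by
        rw [hspan']; trivial
      induction hx using Submodule.span_induction with
      | mem y hy =>
        obtain ⟨i, hi, rfl⟩ := hy
        replace hi : 1 ≤ i := hi
        rcases eq_or_ne i 1 with rfl | hi1
        · rcases eq_or_ne j 1 with rfl | hj1
          · rw [lie_self]; exact Submodule.zero_mem _
          · have hj2 : 2 ≤ j := by omega
            rw [hbr1 j hj2]
            exact Submodule.neg_mem _ (hmem _ _ (by omega))
        · rcases eq_or_ne j 1 with rfl | hj1
          · rw [hbr i (by omega)]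
            exact hmem _ _ (by omega)
          · rw [hzero i j hi (by omega) hi1 hj1]
            exact Submodule.zero_mem _
      | zero => rw [zero_lie]; exact Submodule.zero_mem _
      | add a b _ _ ha hb => rw [add_lie]; exact Submodule.add_mem _ ha hb
      | smul c a _ ha => rw [smul_lie]; exact Submodule.smul_mem _ _ ha
    induction hn' using Submodule.span_induction with
    | mem y hy =>
      obtain ⟨j, hj, rfl⟩ := hy
      exact key j hj x
    | zero => rw [lie_zero]; exact Submodule.zero_mem _
    | add a b _ _ ha hb => rw [lie_add]; exact Submodule.add_mem _ ha hb
    | smul c a _ ha => rw [lie_smul]; exact Submodule.smul_mem _ _ ha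
  · rw [Submodule.span_le]
    rintro _ ⟨k, hk, rfl⟩
    have hk' : max (m + 1) 3 ≤ k := hk
    have hbrk : ⁅e 1, e (k - 1)⁆ = -e k := by
      rw [hbr1 (k - 1) (by omega), show k - 1 + 1 = k from by omega]
    have hkN : e (k - 1) ∈ N := by
      rw [← LieSubmodule.mem_toSubmodule, hN]
      exact hmem _ _ (by omega)
    have : ⁅e 1, e (k - 1)⁆ ∈ {m_1 : L | ∃ x ∈ (⊤ : LieIdeal ℂ L), ∃ n ∈ N, ⁅x, n⁆ = m_1} :=
      ⟨e 1, trivial, e (k - 1), hkN, rfl⟩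
    rw [show e k = -⁅e 1, e (k - 1)⁆ from by rw [hbrk, neg_neg]]
    exact Submodule.neg_mem _ (Submodule.subset_span this)

end helpers


/-- For the Lie algebra 𝔪₀, dim(L¹/L²) = 2 and dim(L^i/L^{i+1}) = 1 for i ≥ 2.
(Here `LieModule.lowerCentralSeries ℂ L L k` is the paper's L^{k+1}, so L^i is the term
with index i−1.) -/
theorem m0_lcs_quotient_dims
    (L : Type*) [LieRing L] [LieAlgebra ℂ L] (e : ℕ → L)
    (hind : LinearIndependent ℂ (fun i : {n : ℕ // 1 ≤ n} => e i.1))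
    (hspan : Submodule.span ℂ (Set.range (fun i : {n : ℕ // 1 ≤ n} => e i.1)) = ⊤)
    (hbr : ∀ i, 2 ≤ i → ⁅e i, e 1⁆ = e (i + 1))
    (hzero : ∀ i j, 1 ≤ i → 1 ≤ j → i ≠ 1 → j ≠ 1 → ⁅e i, e j⁆ = 0) :
    Module.rank ℂ (L ⧸ (LieModule.lowerCentralSeries ℂ L L 1).toSubmodule) = 2 ∧
    ∀ i : ℕ, 2 ≤ i →
      Module.rank ℂ
        ((LieModule.lowerCentralSeries ℂ L L (i - 1)).toSubmodule ⧸
          Submodule.comap ((LieModule.lowerCentralSeries ℂ L L (i - 1)).toSubmodule).subtype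
            (LieModule.lowerCentralSeries ℂ L L i).toSubmodule) = 1 := by
  have hspan' : Submodule.span ℂ (e '' {n : ℕ | 1 ≤ n}) = ⊤ := by
    rw [Set.image_eq_range]; exact hspan
  -- the lower central series
  have lcs_eq : ∀ k : ℕ, 1 ≤ k →
      (LieModule.lowerCentralSeries ℂ L L k).toSubmodule
        = Submodule.span ℂ (e '' {n : ℕ | k + 2 ≤ n}) := by
    intro k hk
    induction k with
    | zero => omega
    | succ k ih =>
      rw [LieModule.lowerCentralSeries_succ]
      rcases Nat.eq_zero_or_pos k with rfl | hkpos
      · rw [LieModule.lowerCentralSeries_zero]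
        have h := m0_bracket_aux e hspan' hbr hzero 1 le_rfl ⊤
          (by rw [LieSubmodule.top_toSubmodule, hspan'])
        rw [h, show max (1 + 1) 3 = 0 + 1 + 2 from by omega]
      · have h := m0_bracket_aux e hspan' hbr hzero (k + 2) (by omega)
          (LieModule.lowerCentralSeries ℂ L L k) (ih hkpos)
        rw [h, show max (k + 2 + 1) 3 = k + 1 + 2 from by omega]
  constructor
  · -- dim L/L² = 2
    rw [lcs_eq 1 le_rfl]
    let B : Module.Basis {n : ℕ // 1 ≤ n} ℂ L := Module.Basis.mk hind hspan.ge
    have himg : (⇑B) '' {i : {n : ℕ // 1 ≤ n} | 3 ≤ i.1} = e '' {n : ℕ | 3 ≤ n} := by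
      rw [show ⇑B = fun i : {n : ℕ // 1 ≤ n} => e i.1 from Module.Basis.coe_mk _ _]
      ext x
      constructor
      · rintro ⟨⟨n, hn1⟩, hn3, rfl⟩; exact ⟨n, hn3, rfl⟩
      · rintro ⟨n, hn3, rfl⟩; exact ⟨⟨n, by simp at hn3 ⊢; omega⟩, hn3, rfl⟩
    rw [← himg]
    have H := rank_quotient_span_image_basis B {i : {n : ℕ // 1 ≤ n} | 3 ≤ i.1}
    have hset : ({i : {n : ℕ // 1 ≤ n} | 3 ≤ i.1})ᶜ
        = {(⟨1, le_rfl⟩ : {n : ℕ // 1 ≤ n}), ⟨2, by omega⟩} := by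
      ext ⟨n, hn⟩
      simp only [Set.mem_compl_iff, Set.mem_setOf_eq, Set.mem_insert_iff, Set.mem_singleton_iff,
        Subtype.ext_iff]
      omega
    have hcard : #(↥({i : {n : ℕ // 1 ≤ n} | 3 ≤ i.1})ᶜ) = 2 := by
      rw [hset]
      rw [Cardinal.mk_insert (by simp only [Set.mem_singleton_iff, Subtype.mk.injEq]; omega), Cardinal.mk_singleton]
      norm_num
    rw [hcard] at H
    rw [Cardinal.lift_uzero] at H
    simpa using H
  · -- dim Lⁱ/Lⁱ⁺¹ = 1
    intro i hi
    have h1 : (LieModule.lowerCentralSeries ℂ L L (i - 1)).toSubmodule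
        = Submodule.span ℂ (e '' {n : ℕ | i + 1 ≤ n}) := by
      rw [lcs_eq (i - 1) (by omega), show i - 1 + 2 = i + 1 from by omega]
    have h2 : (LieModule.lowerCentralSeries ℂ L L i).toSubmodule
        = Submodule.span ℂ (e '' {n : ℕ | i + 2 ≤ n}) := lcs_eq i (by omega)
    rw [h1, h2, Set.image_eq_range e {n : ℕ | i + 1 ≤ n}]
    set v : {n : ℕ | i + 1 ≤ n} → L := fun j => e j.1 with hv
    have hvli : LinearIndependent ℂ v :=
      hind.comp (fun j : {n : ℕ | i + 1 ≤ n} =>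
          (⟨j.1, le_trans (Nat.le_add_left 1 i) j.2⟩ : {n : ℕ // 1 ≤ n}))
        (fun a b h => by simpa [Subtype.ext_iff] using h)
    set W := Submodule.span ℂ (Set.range v) with hW
    set Bsub := Module.Basis.span hvli with hBsub
    set s' : Set {n : ℕ | i + 1 ≤ n} := {j | i + 2 ≤ j.1} with hs'
    have hmap : Submodule.map W.subtype (Submodule.span ℂ ((⇑Bsub) '' s'))
        = Submodule.span ℂ (e '' {n : ℕ | i + 2 ≤ n}) := by
      rw [Submodule.map_span, ← Set.image_comp]
      have hcomp : ⇑W.subtype ∘ ⇑Bsub = fun j : {n : ℕ | i + 1 ≤ n} => e j.1 := by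
        funext j
        simp only [Function.comp_apply, Submodule.coe_subtype, hBsub, Module.Basis.span_apply, hv]
      rw [hcomp]
      congr 1
      ext x
      constructor
      · rintro ⟨j, hjs, rfl⟩
        exact ⟨j.1, hjs, rfl⟩
      · rintro ⟨n, hns, rfl⟩
        exact ⟨⟨n, show i + 1 ≤ n from le_trans (Nat.le_succ (i + 1)) hns⟩, hns, rfl⟩
    have hcomap : Submodule.comap W.subtype (Submodule.span ℂ (e '' {n : ℕ | i + 2 ≤ n}))
        = Submodule.span ℂ ((⇑Bsub) '' s') := by
      rw [← hmap, Submodule.comap_map_eq_of_injective W.injective_subtype]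
    rw [hcomap]
    have H := rank_quotient_span_image_basis Bsub s'
    have hset : s'ᶜ = {(⟨i + 1, by simp⟩ : {n : ℕ | i + 1 ≤ n})} := by
      ext ⟨n, hn⟩
      simp only [hs', Set.mem_compl_iff, Set.mem_setOf_eq, Set.mem_singleton_iff,
        Subtype.ext_iff]
      simp at hn
      omega
    rw [hset, Cardinal.mk_singleton, Cardinal.lift_uzero] at H
    simpa using H
end

section
/- Let d be a derivation of 𝔪₀ with d(e₁) = Σ_{i=1}^{t} αᵢ eᵢ and d(e_k) = ((k−2)α₁ + β₂) e_k + Σ_{i=3}^{t} βᵢ e_{i+k−2} for k ≥ 2. If α₁ = β₂ = 0, then d is potentially nilpotent, i.e. ⋂_{k≥1} Im(d^k) = 0. -/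
/-- A derivation d of 𝔪₀ of the standard form with α₁ = β₂ = 0 is potentially
nilpotent: ⋂_{k≥1} Im(d^k) = 0. -/
theorem m0_derivation_potentially_nilpotent
    (L : Type*) [LieRing L] [LieAlgebra ℂ L] (e : ℕ → L)
    (hind : LinearIndependent ℂ (fun i : {n : ℕ // 1 ≤ n} => e i.1))
    (hspan : Submodule.span ℂ (Set.range (fun i : {n : ℕ // 1 ≤ n} => e i.1)) = ⊤)
    (hbr : ∀ i, 2 ≤ i → ⁅e i, e 1⁆ = e (i + 1))
    (hzero : ∀ i j, 1 ≤ i → 1 ≤ j → i ≠ 1 → j ≠ 1 → ⁅e i, e j⁆ = 0)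
    (d : Module.End ℂ L)
    (hd : ∀ a b : L, d ⁅a, b⁆ = ⁅d a, b⁆ + ⁅a, d b⁆)
    (t : ℕ) (α β : ℕ → ℂ)
    (hα : α 1 = 0) (hβ : β 2 = 0)
    (hd1 : d (e 1) = ∑ i ∈ Finset.Icc 1 t, α i • e i)
    (hdk : ∀ k, 2 ≤ k →
      d (e k) = (((k : ℂ) - 2) * α 1 + β 2) • e k
        + ∑ i ∈ Finset.Icc 3 t, β i • e (i + k - 2)) :
    ⨅ k : ℕ, LinearMap.range (d ^ (k + 1)) = ⊥ := by
  classical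
  set b : Module.Basis {n : ℕ // 1 ≤ n} ℂ L := Module.Basis.mk hind (by rw [hspan]) with hbdef
  have hb : ∀ j : {n : ℕ // 1 ≤ n}, b j = e j.1 := fun j => Module.Basis.mk_apply _ _ _
  set F : ℕ → Submodule ℂ L :=
    fun n => Submodule.span ℂ (b '' {j : {n : ℕ // 1 ≤ n} | n ≤ j.1}) with hFdef
  have hFmono : ∀ {n m : ℕ}, n ≤ m → F m ≤ F n := by
    intro n m h
    exact Submodule.span_mono (Set.image_mono (fun j hj => le_trans h hj))
  have hmem : ∀ i : ℕ, ∀ n : ℕ, 1 ≤ i → n ≤ i → e i ∈ F n := by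
    intro i n hi hn
    have : e i = b ⟨i, hi⟩ := (hb ⟨i, hi⟩).symm
    rw [this]
    exact Submodule.subset_span ⟨⟨i, hi⟩, hn, rfl⟩
  have hde : ∀ i : ℕ, 1 ≤ i → d (e i) ∈ F (i + 1) := by
    intro i hi
    rcases eq_or_lt_of_le hi with h1 | h2
    · rw [← h1, hd1]
      refine Submodule.sum_mem _ ?_
      intro j hj
      rcases eq_or_lt_of_le (Finset.mem_Icc.mp hj).1 with hj1 | hj2
      · rw [← hj1, hα, zero_smul]; exact Submodule.zero_mem _
      · exact Submodule.smul_mem _ _ (hmem j 2 (by omega) (by omega))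
    · rw [hdk i h2, hα, hβ]
      simp only [mul_zero, add_zero, zero_smul, zero_add]
      refine Submodule.sum_mem _ ?_
      intro j hj
      have hj3 : 3 ≤ j := (Finset.mem_Icc.mp hj).1
      exact Submodule.smul_mem _ _ (hmem (j + i - 2) (i + 1) (by omega) (by omega))
  have hdF : ∀ n : ℕ, 1 ≤ n → ∀ x ∈ F n, d x ∈ F (n + 1) := by
    intro n hn x hx
    refine Submodule.span_induction ?_ ?_ ?_ ?_ hx
    · rintro y ⟨j, hj, rfl⟩
      have hj' : n ≤ j.1 := hj
      rw [hb j]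
      exact hFmono (Nat.add_le_add_right hj' 1) (hde j.1 j.2)
    · simp
    · intro a c _ _ ha hc; rw [map_add]; exact Submodule.add_mem _ ha hc
    · intro r a _ ha; rw [map_smul]; exact Submodule.smul_mem _ _ ha
  have hF1 : F 1 = ⊤ := by
    have : (b '' {j : {n : ℕ // 1 ≤ n} | 1 ≤ j.1}) = Set.range b := by
      ext y; constructor
      · rintro ⟨j, _, rfl⟩; exact ⟨j, rfl⟩
      · rintro ⟨j, rfl⟩; exact ⟨j, j.2, rfl⟩
    rw [hFdef]; simp only [this]; exact b.span_eq
  have hpow : ∀ k : ℕ, ∀ x : L, (d ^ (k + 1)) x ∈ F (k + 2) := by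
    intro k
    induction k with
    | zero =>
      intro x
      simpa using hdF 1 le_rfl x (by rw [hF1]; trivial)
    | succ n ih =>
      intro x
      have heq : (d ^ (n + 1 + 1)) x = d ((d ^ (n + 1)) x) := by
        rw [pow_succ']; rfl
      rw [heq]
      exact hdF (n + 2) (by omega) _ (ih x)
  rw [eq_bot_iff]
  intro x hx
  have hxF : ∀ m : ℕ, 1 ≤ m → x ∈ F (m + 1) := by
    intro m hm
    have h1 : x ∈ LinearMap.range (d ^ (m - 1 + 1)) :=
      (Submodule.mem_iInf _).mp hx (m - 1)
    obtain ⟨y, rfl⟩ := h1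
    have := hpow (m - 1) y
    have hmm : m - 1 + 2 = m + 1 := by omega
    rwa [hmm] at this
  have hrepr : b.repr x = 0 := by
    ext j
    have hx' : x ∈ F (j.1 + 1) := hxF j.1 j.2
    have hs : ↑(b.repr x).support ⊆ {i : {n : ℕ // 1 ≤ n} | j.1 + 1 ≤ i.1} :=
      b.mem_span_image.mp hx'
    by_contra hne
    have : j ∈ (b.repr x).support := Finsupp.mem_support_iff.mpr hne
    have : j.1 + 1 ≤ j.1 := hs this
    omega
  have : x = 0 := by
    have := b.repr.injective (a₁ := x) (a₂ := 0)
    simpa [hrepr] using this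
  simp [this]
end

section
/- The center of the Lie algebra M̃₀ is trivial. -/
/-- The center of the Lie algebra M̃₀ is trivial. -/
theorem M0Tilde_center_trivial
    (L : Type*) [LieRing L] [LieAlgebra ℂ L] (x y : L) (e : ℕ → L)
    (hind : LinearIndependent ℂ
      (Sum.elim (fun _ : Unit => x)
        (Sum.elim (fun _ : Unit => y) (fun i : {n : ℕ // 1 ≤ n} => e i.1))))
    (hspan : Submodule.span ℂ (Set.range
      (Sum.elim (fun _ : Unit => x)
        (Sum.elim (fun _ : Unit => y) (fun i : {n : ℕ // 1 ≤ n} => e i.1)))) = ⊤)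
    (hbr : ∀ i, 2 ≤ i → ⁅e i, e 1⁆ = e (i + 1))
    (hzero : ∀ i j, 1 ≤ i → 1 ≤ j → i ≠ 1 → j ≠ 1 → ⁅e i, e j⁆ = 0)
    (hx1 : ⁅x, e 1⁆ = -e 1)
    (hxi : ∀ i, 2 ≤ i → ⁅x, e i⁆ = (-(((i : ℂ)) - 1)) • e i)
    (hyi : ∀ i, 2 ≤ i → ⁅y, e i⁆ = -e i)
    (hy1 : ⁅y, e 1⁆ = 0)
    (hxy : ⁅x, y⁆ = 0) :
    LieAlgebra.center ℂ L = ⊥ := by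
  set v := (Sum.elim (fun _ : Unit => x)
        (Sum.elim (fun _ : Unit => y) (fun i : {n : ℕ // 1 ≤ n} => e i.1))) with hv
  let B : Module.Basis (Unit ⊕ Unit ⊕ {n : ℕ // 1 ≤ n}) ℂ L := Module.Basis.mk hind hspan.ge
  have hBx : B (Sum.inl ()) = x := by simp [B, Module.Basis.mk_apply, hv]
  have hBy : B (Sum.inr (Sum.inl ())) = y := by simp [B, Module.Basis.mk_apply, hv]
  have hBe : ∀ n : {n : ℕ // 1 ≤ n}, B (Sum.inr (Sum.inr n)) = e n.1 := by
    intro n; simp [B, Module.Basis.mk_apply, hv]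
  have h1x : ⁅e 1, x⁆ = e 1 := by rw [← lie_skew, hx1, neg_neg]
  have h1y : ⁅e 1, y⁆ = 0 := by rw [← lie_skew, hy1, neg_zero]
  have h1e : ∀ m, 2 ≤ m → ⁅e 1, e m⁆ = -e (m + 1) := by
    intro m hm; rw [← lie_skew, hbr m hm]
  have h2x : ⁅e 2, x⁆ = e 2 := by
    rw [← lie_skew, hxi 2 le_rfl]; norm_num
  have h2y : ⁅e 2, y⁆ = e 2 := by rw [← lie_skew, hyi 2 le_rfl, neg_neg]
  have h2e1 : ⁅e 2, e 1⁆ = e 3 := hbr 2 le_rfl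
  have h2em : ∀ m, 2 ≤ m → ⁅e 2, e m⁆ = 0 := fun m hm =>
    hzero 2 m (by norm_num) (le_trans (by norm_num) hm) (by norm_num) (by omega)
  rw [eq_bot_iff]
  intro z hz
  rw [LieSubmodule.mem_bot]
  have hc : ∀ w : L, ⁅w, z⁆ = 0 := (LieModule.mem_maxTrivSubmodule ℂ L L z).mp hz
  have hcoord : ∀ i j, (B.coord j) (B i) = if i = j then 1 else 0 := by
    intro i j
    rw [Module.Basis.coord_apply, Module.Basis.repr_self, Finsupp.single_apply]
  have key : ∀ (w : L) (j : Unit ⊕ Unit ⊕ {n : ℕ // 1 ≤ n}),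
      ((B.repr z).sum fun i c => c * (B.coord j) ⁅w, B i⁆) = 0 := by
    intro w j
    have hzrep : ((B.repr z).sum fun i c => c • B i) = z := by
      rw [← Finsupp.linearCombination_apply]; exact B.linearCombination_repr z
    set T : L →ₗ[ℂ] ℂ := (B.coord j).comp (LieAlgebra.ad ℂ L w) with hT
    have hTz : T z = 0 := by simp [hT, LieAlgebra.ad_apply, hc w]
    have hexp : T z = (B.repr z).sum fun i c => c * (B.coord j) ⁅w, B i⁆ := by
      conv_lhs => rw [← hzrep]
      rw [Finsupp.sum, map_sum, Finsupp.sum]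
      refine Finset.sum_congr rfl fun i _ => ?_
      rw [map_smul, smul_eq_mul]; rfl
    rw [← hexp, hTz]
  have extract : ∀ (w : L) (j i₀ : Unit ⊕ Unit ⊕ {n : ℕ // 1 ≤ n}),
      (∀ i, i ≠ i₀ → (B.repr z) i * (B.coord j) ⁅w, B i⁆ = 0) →
      (B.repr z) i₀ * (B.coord j) ⁅w, B i₀⁆ = 0 := by
    intro w j i₀ hothers
    have h := key w j
    rw [Finsupp.sum] at h
    rw [← h]
    refine (Finset.sum_eq_single i₀ (fun i _ hne => hothers i hne) (fun hni => ?_)).symm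
    rw [Finsupp.notMem_support_iff.mp hni, zero_mul]
  -- a = 0 : w = e 1, j = index of e 1
  have ha : (B.repr z) (Sum.inl ()) = 0 := by
    have h := extract (e 1) (Sum.inr (Sum.inr ⟨1, le_rfl⟩)) (Sum.inl ()) ?_
    · rw [hBx, h1x] at h
      have he : e 1 = B (Sum.inr (Sum.inr ⟨1, le_rfl⟩)) := (hBe ⟨1, le_rfl⟩).symm
      rw [he, hcoord, if_pos rfl, mul_one] at h
      exact h
    · rintro (⟨⟩ | ⟨⟩ | ⟨m, hm⟩) hne
      · exact absurd rfl hne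
      · rw [hBy, h1y, map_zero, mul_zero]
      · rw [hBe]
        rcases eq_or_lt_of_le hm with hm1 | hm2
        · simp only [← hm1, lie_self, map_zero, mul_zero]
        · rw [h1e m hm2, map_neg]
          have he : e (m + 1) = B (Sum.inr (Sum.inr ⟨m + 1, by omega⟩)) :=
            (hBe ⟨m + 1, by omega⟩).symm
          rw [he, hcoord, if_neg (by
            intro hcontra
            simp only [Sum.inr.injEq, Subtype.mk.injEq] at hcontra
            omega)]
          rw [neg_zero, mul_zero]
  -- c k = 0 for k ≥ 2 : w = e 1, j = index of e (k+1)
  have hck : ∀ k (hk : 2 ≤ k),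
      (B.repr z) (Sum.inr (Sum.inr ⟨k, le_trans one_le_two hk⟩)) = 0 := by
    intro k hk
    have h := extract (e 1) (Sum.inr (Sum.inr ⟨k + 1, by omega⟩))
      (Sum.inr (Sum.inr ⟨k, le_trans one_le_two hk⟩)) ?_
    · rw [hBe, h1e k hk, map_neg] at h
      have he : e (k + 1) = B (Sum.inr (Sum.inr ⟨k + 1, by omega⟩)) :=
        (hBe ⟨k + 1, by omega⟩).symm
      rw [he, hcoord, if_pos rfl] at h
      simpa using h
    · rintro (⟨⟩ | ⟨⟩ | ⟨m, hm⟩) hne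
      · rw [hBx, h1x]
        have he : e 1 = B (Sum.inr (Sum.inr ⟨1, le_rfl⟩)) := (hBe ⟨1, le_rfl⟩).symm
        rw [he, hcoord, if_neg (by
          intro hcontra
          simp only [Sum.inr.injEq, Subtype.mk.injEq] at hcontra
          omega)]
        rw [mul_zero]
      · rw [hBy, h1y, map_zero, mul_zero]
      · rw [hBe]
        rcases eq_or_lt_of_le hm with hm1 | hm2
        · simp only [← hm1, lie_self, map_zero, mul_zero]
        · rw [h1e m hm2, map_neg]
          have hmk : m ≠ k := by
            intro hmk
            exact hne (by simp only [hmk])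
          have he : e (m + 1) = B (Sum.inr (Sum.inr ⟨m + 1, by omega⟩)) :=
            (hBe ⟨m + 1, by omega⟩).symm
          rw [he, hcoord, if_neg (by
            intro hcontra
            simp only [Sum.inr.injEq, Subtype.mk.injEq] at hcontra
            omega)]
          rw [neg_zero, mul_zero]
  -- c 1 = 0 : w = e 2, j = index of e 3
  have hc1 : (B.repr z) (Sum.inr (Sum.inr ⟨1, le_rfl⟩)) = 0 := by
    have h := extract (e 2) (Sum.inr (Sum.inr ⟨3, by omega⟩))
      (Sum.inr (Sum.inr ⟨1, le_rfl⟩)) ?_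
    · rw [hBe, h2e1] at h
      have he : e 3 = B (Sum.inr (Sum.inr ⟨3, by omega⟩)) := (hBe ⟨3, by omega⟩).symm
      rw [he, hcoord, if_pos rfl, mul_one] at h
      exact h
    · rintro (⟨⟩ | ⟨⟩ | ⟨m, hm⟩) hne
      · rw [hBx, h2x]
        have he : e 2 = B (Sum.inr (Sum.inr ⟨2, one_le_two⟩)) := (hBe ⟨2, one_le_two⟩).symm
        rw [he, hcoord, if_neg (by
          intro hcontra
          simp only [Sum.inr.injEq, Subtype.mk.injEq] at hcontra
          omega)]
        rw [mul_zero]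
      · rw [hBy, h2y]
        have he : e 2 = B (Sum.inr (Sum.inr ⟨2, one_le_two⟩)) := (hBe ⟨2, one_le_two⟩).symm
        rw [he, hcoord, if_neg (by
          intro hcontra
          simp only [Sum.inr.injEq, Subtype.mk.injEq] at hcontra
          omega)]
        rw [mul_zero]
      · have hm2 : 2 ≤ m := by
          rcases eq_or_lt_of_le hm with hm1 | hm2
          · exact absurd (by simp only [← hm1]) hne
          · exact hm2
        rw [hBe, h2em m hm2, map_zero, mul_zero]
  -- b = 0 : w = e 2, j = index of e 2 (uses a = 0)
  have hb : (B.repr z) (Sum.inr (Sum.inl ())) = 0 := by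
    have h := extract (e 2) (Sum.inr (Sum.inr ⟨2, one_le_two⟩)) (Sum.inr (Sum.inl ())) ?_
    · rw [hBy, h2y] at h
      have he : e 2 = B (Sum.inr (Sum.inr ⟨2, one_le_two⟩)) := (hBe ⟨2, one_le_two⟩).symm
      rw [he, hcoord, if_pos rfl, mul_one] at h
      exact h
    · rintro (⟨⟩ | ⟨⟩ | ⟨m, hm⟩) hne
      · rw [ha, zero_mul]
      · exact absurd rfl hne
      · rw [hBe]
        rcases eq_or_lt_of_le hm with hm1 | hm2
        · simp only [← hm1, h2e1]
          have he : e 3 = B (Sum.inr (Sum.inr ⟨3, by omega⟩)) := (hBe ⟨3, by omega⟩).symm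
          rw [he, hcoord, if_neg (by
            intro hcontra
            simp only [Sum.inr.injEq, Subtype.mk.injEq] at hcontra
            omega)]
          rw [mul_zero]
        · rw [h2em m hm2, map_zero, mul_zero]
  have hrepr : B.repr z = 0 := by
    ext j
    rcases j with ⟨⟩ | ⟨⟩ | ⟨n, hn⟩
    · simpa using ha
    · simpa using hb
    · rcases eq_or_lt_of_le hn with hn1 | hn2
      · have hj : (⟨n, hn⟩ : {n : ℕ // 1 ≤ n}) = ⟨1, le_rfl⟩ := by
          simp only [Subtype.mk.injEq]; omega
        rw [hj]; simpa using hc1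
      · have hj : (⟨n, hn⟩ : {n : ℕ // 1 ≤ n}) = ⟨n, le_trans one_le_two hn2⟩ := rfl
        rw [hj]; simpa using hck n hn2
  exact B.repr.map_eq_zero_iff.mp hrepr
end

section
/- The center of the Lie algebra M̃₂ is trivial. -/
/-- The center of the Lie algebra M̃₂ is trivial. -/
theorem M2Tilde_center_trivial
    (L : Type*) [LieRing L] [LieAlgebra ℂ L] (x : L) (e : ℕ → L)
    (hind : LinearIndependent ℂ
      (Sum.elim (fun _ : Unit => x) (fun i : {n : ℕ // 1 ≤ n} => e i.1)))
    (hspan : Submodule.span ℂ (Set.range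
      (Sum.elim (fun _ : Unit => x) (fun i : {n : ℕ // 1 ≤ n} => e i.1))) = ⊤)
    (hbr1 : ∀ i, 2 ≤ i → ⁅e 1, e i⁆ = e (i + 1))
    (hbr2 : ∀ j, 3 ≤ j → ⁅e 2, e j⁆ = e (j + 2))
    (hzero : ∀ i j, 3 ≤ i → 3 ≤ j → ⁅e i, e j⁆ = 0)
    (hx1 : ⁅x, e 1⁆ = -e 1)
    (hxi : ∀ i, 2 ≤ i → ⁅x, e i⁆ = (-(i : ℂ)) • e i) :
    LieAlgebra.center ℂ L = ⊥ := by
  rw [eq_bot_iff]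
  intro z hz
  rw [LieSubmodule.mem_bot]
  have hz' : ∀ a : L, ⁅a, z⁆ = 0 := fun a =>
    (LieModule.mem_maxTrivSubmodule ℂ L L z).mp hz a
  set v : Unit ⊕ {n : ℕ // 1 ≤ n} → L :=
    Sum.elim (fun _ : Unit => x) (fun i => e i.1) with hv
  let B : Module.Basis (Unit ⊕ {n : ℕ // 1 ≤ n}) ℂ L := Module.Basis.mk hind (ge_of_eq hspan)
  have hB : ∀ j, B j = v j := fun j => Module.Basis.mk_apply hind _ j
  set c := B.repr z with hc
  set d : Unit ⊕ {n : ℕ // 1 ≤ n} → ℂ :=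
    Sum.elim (fun _ : Unit => (0:ℂ)) (fun i => -(i.1:ℂ)) with hdd
  have hd : ∀ j, ⁅x, v j⁆ = d j • v j := by
    rintro (⟨⟩ | ⟨i, hi⟩)
    · simp [v, d]
    · rcases eq_or_lt_of_le hi with h1 | h2
      · simp only [v, d, Sum.elim_inr, ← h1, hx1]
        norm_num
      · simp [v, d, hxi i h2]
  have hzr : z = ∑ j ∈ c.support, c j • v j := by
    conv_lhs => rw [← B.linearCombination_repr z]
    rw [Finsupp.linearCombination_apply, Finsupp.sum]
    exact Finset.sum_congr rfl fun j _ => by rw [hB]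
  have hbr : ∑ j ∈ c.support, (c j * d j) • v j = 0 := by
    have h0 : (LieAlgebra.ad ℂ L x) z = 0 := hz' x
    rw [hzr, map_sum] at h0
    calc ∑ j ∈ c.support, (c j * d j) • v j
        = ∑ j ∈ c.support, (LieAlgebra.ad ℂ L x) (c j • v j) := by
          refine Finset.sum_congr rfl fun j _ => ?_
          rw [map_smul, LieAlgebra.ad_apply, hd j, smul_smul]
      _ = 0 := h0
  have hcoef : ∀ j ∈ c.support, c j * d j = 0 :=
    linearIndependent_iff'.mp hind c.support (fun j => c j * d j) hbr
  have hcr : ∀ i : {n : ℕ // 1 ≤ n}, c (Sum.inr i) = 0 := by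
    intro i
    by_cases hmem : Sum.inr i ∈ c.support
    · have := hcoef _ hmem
      have hdne : d (Sum.inr i) ≠ 0 := by
        simp only [d, Sum.elim_inr, ne_eq, neg_eq_zero, Nat.cast_eq_zero]
        omega
      exact (mul_eq_zero.mp this).resolve_right hdne
    · exact Finsupp.notMem_support_iff.mp hmem
  have hcz : c = Finsupp.single (Sum.inl ()) (c (Sum.inl ())) := by
    ext j
    rcases j with ⟨⟩ | i
    · simp
    · rw [hcr i, Finsupp.single_apply]
      simp
  have hzx : z = c (Sum.inl ()) • x := by
    conv_lhs => rw [← B.linearCombination_repr z, ← hc, hcz]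
    rw [Finsupp.linearCombination_single, hB]
    rfl
  have h1 : ⁅e 1, z⁆ = 0 := hz' (e 1)
  rw [hzx, lie_smul, ← lie_skew, hx1, neg_neg] at h1
  have he1 : e 1 ≠ 0 := by
    have := B.ne_zero (Sum.inr ⟨1, le_refl 1⟩)
    rwa [hB] at this
  have : c (Sum.inl ()) = 0 := by
    rcases smul_eq_zero.mp h1 with h | h
    · exact h
    · exact absurd h he1
  rw [hzx, this, zero_smul]
end

section
/- Every derivation d of the Lie algebra M̃₀ has the form: there exist scalars α₁, α₃, …, α_n, β₂, β₃ with d(e₁) = α₁ e₁ + Σ_{i=3}^{n} αᵢ eᵢ, d(eᵢ) = ((i−2)α₁ + β₂) eᵢ + β₃ e_{i+1} for i ≥ 2, d(x) = −β₃ e₁ + Σ_{i=2}^{n−1} (i−1) α_{i+1} eᵢ, and d(y) = Σ_{i=2}^{n−1} α_{i+1} eᵢ. -/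
namespace M0TildeAux

abbrev Idx := Unit ⊕ Unit ⊕ {n : ℕ // 1 ≤ n}

def ix (k : ℕ) (hk : 1 ≤ k) : Idx := Sum.inr (Sum.inr ⟨k, hk⟩)

@[simp] lemma ix_ne_inl (k : ℕ) (hk : 1 ≤ k) : ix k hk ≠ Sum.inl () := by simp [ix]
@[simp] lemma ix_ne_inry (k : ℕ) (hk : 1 ≤ k) : ix k hk ≠ Sum.inr (Sum.inl ()) := by simp [ix]
lemma ix_eq_iff (k m : ℕ) (hk : 1 ≤ k) (hm : 1 ≤ m) : ix k hk = ix m hm ↔ k = m := by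
  simp [ix]

section
variable {L : Type*} [LieRing L] [LieAlgebra ℂ L]

@[simp] lemma single_ix_inl (k : ℕ) (hk : 1 ≤ k) (t : ℂ) :
    (Finsupp.single (ix k hk) t) (Sum.inl ()) = 0 :=
  Finsupp.single_eq_of_ne' (ix_ne_inl k hk)

@[simp] lemma single_ix_inry (k : ℕ) (hk : 1 ≤ k) (t : ℂ) :
    (Finsupp.single (ix k hk) t) (Sum.inr (Sum.inl ())) = 0 :=
  Finsupp.single_eq_of_ne' (ix_ne_inry k hk)

lemma single_ix_ix (k m : ℕ) (hk : 1 ≤ k) (hm : 1 ≤ m) (t : ℂ) :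
    (Finsupp.single (ix k hk) t) (ix m hm) = if k = m then t else 0 := by
  rw [Finsupp.single_apply]
  by_cases h : k = m
  · subst h; simp
  · rw [if_neg (fun hh => h ((ix_eq_iff k m hk hm).mp hh)), if_neg h]

@[simp] lemma single_inl_ix (k : ℕ) (hk : 1 ≤ k) (t : ℂ) :
    (Finsupp.single (Sum.inl () : Idx) t) (ix k hk) = 0 :=
  Finsupp.single_eq_of_ne' (ix_ne_inl k hk).symm

@[simp] lemma single_inry_ix (k : ℕ) (hk : 1 ≤ k) (t : ℂ) :
    (Finsupp.single (Sum.inr (Sum.inl ()) : Idx) t) (ix k hk) = 0 :=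
  Finsupp.single_eq_of_ne' (ix_ne_inry k hk).symm

def rmul (z : L) : L →ₗ[ℂ] L :=
  ⟨⟨fun v => ⁅v, z⁆, fun a b => add_lie a b z⟩, fun t a => smul_lie t a z⟩

def lmul (z : L) : L →ₗ[ℂ] L :=
  ⟨⟨fun v => ⁅z, v⁆, fun a b => lie_add z a b⟩, fun t a => lie_smul t z a⟩

@[simp] lemma rmul_apply (z v : L) : rmul z v = ⁅v, z⁆ := rfl
@[simp] lemma lmul_apply (z v : L) : lmul z v = ⁅z, v⁆ := rfl

lemma keyE (B : Module.Basis Idx ℂ L) (f : L →ₗ[ℂ] L) (v : L) :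
    f v = ∑ i ∈ (B.repr v).support, B.repr v i • f (B i) := by
  conv_lhs => rw [← B.linearCombination_repr v, Finsupp.linearCombination_apply,
    Finsupp.sum, map_sum]
  exact Finset.sum_congr rfl fun i _ => by rw [map_smul]

lemma key (B : Module.Basis Idx ℂ L) (f : L →ₗ[ℂ] L) (v : L) (j : Idx) :
    B.repr (f v) j = ∑ i ∈ (B.repr v).support, B.repr v i * B.repr (f (B i)) j := by
  conv_lhs => rw [keyE B f v]
  rw [map_sum, Finset.sum_apply']
  exact Finset.sum_congr rfl fun i _ => by rw [map_smul]; rfl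

lemma sum_support_pair {M : Type*} [AddCommMonoid M] (g : Idx →₀ ℂ) (F : Idx → M)
    (i₁ i₂ : Idx) (hne : i₁ ≠ i₂)
    (h0 : ∀ i, i ≠ i₁ → i ≠ i₂ → F i = 0) (hs : ∀ i, g i = 0 → F i = 0) :
    ∑ i ∈ g.support, F i = F i₁ + F i₂ := by
  have e1 : ∑ i ∈ g.support, F i = ∑ i ∈ g.support ∪ {i₁, i₂}, F i :=
    Finset.sum_subset Finset.subset_union_left
      (fun i _ hi => hs i (Finsupp.notMem_support_iff.mp hi))
  have e2 : ∑ i ∈ ({i₁, i₂} : Finset Idx), F i = ∑ i ∈ g.support ∪ {i₁, i₂}, F i :=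
    Finset.sum_subset Finset.subset_union_right
      (fun i _ hi => by
        simp only [Finset.mem_insert, Finset.mem_singleton, not_or] at hi
        exact h0 i hi.1 hi.2)
  rw [e1, ← e2, Finset.sum_pair hne]

lemma sum_support_triple {M : Type*} [AddCommMonoid M] (g : Idx →₀ ℂ) (F : Idx → M)
    (i₁ i₂ i₃ : Idx) (h12 : i₁ ≠ i₂) (h13 : i₁ ≠ i₃) (h23 : i₂ ≠ i₃)
    (h0 : ∀ i, i ≠ i₁ → i ≠ i₂ → i ≠ i₃ → F i = 0) (hs : ∀ i, g i = 0 → F i = 0) :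
    ∑ i ∈ g.support, F i = F i₁ + F i₂ + F i₃ := by
  have e1 : ∑ i ∈ g.support, F i = ∑ i ∈ g.support ∪ {i₁, i₂, i₃}, F i :=
    Finset.sum_subset Finset.subset_union_left
      (fun i _ hi => hs i (Finsupp.notMem_support_iff.mp hi))
  have e2 : ∑ i ∈ ({i₁, i₂, i₃} : Finset Idx), F i = ∑ i ∈ g.support ∪ {i₁, i₂, i₃}, F i :=
    Finset.sum_subset Finset.subset_union_right
      (fun i _ hi => by
        simp only [Finset.mem_insert, Finset.mem_singleton, not_or] at hi
        exact h0 i hi.1 hi.2.1 hi.2.2)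
  rw [e1, ← e2]
  rw [Finset.sum_insert (by simp [h12, h13]), Finset.sum_pair h23, add_assoc]

structure Setup (L : Type*) [LieRing L] [LieAlgebra ℂ L] where
  x : L
  y : L
  e : ℕ → L
  B : Module.Basis Idx ℂ L
  hBx : B (Sum.inl ()) = x
  hBy : B (Sum.inr (Sum.inl ())) = y
  hBe : ∀ (k : ℕ) (hk : 1 ≤ k), B (Sum.inr (Sum.inr ⟨k, hk⟩)) = e k
  hbr : ∀ i, 2 ≤ i → ⁅e i, e 1⁆ = e (i + 1)
  hzero : ∀ i j, 1 ≤ i → 1 ≤ j → i ≠ 1 → j ≠ 1 → ⁅e i, e j⁆ = 0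
  hx1 : ⁅x, e 1⁆ = -e 1
  hxi : ∀ i, 2 ≤ i → ⁅x, e i⁆ = (-(((i : ℂ)) - 1)) • e i
  hyi : ∀ i, 2 ≤ i → ⁅y, e i⁆ = -e i
  hy1 : ⁅y, e 1⁆ = 0
  hxy : ⁅x, y⁆ = 0

namespace Setup

variable {L : Type*} [LieRing L] [LieAlgebra ℂ L] (S : Setup L)

/-- coordinate of `v` along `e k` (junk value `0` if `k = 0`). -/
noncomputable def c (k : ℕ) (v : L) : ℂ := if h : 1 ≤ k then S.B.repr v (ix k h) else 0

lemma c_apply (k : ℕ) (hk : 1 ≤ k) (v : L) : S.c k v = S.B.repr v (ix k hk) := dif_pos hk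

lemma c_add (k : ℕ) (a b : L) : S.c k (a + b) = S.c k a + S.c k b := by
  unfold c; split
  · rw [map_add]; rfl
  · rw [add_zero]

lemma c_neg (k : ℕ) (a : L) : S.c k (-a) = -S.c k a := by
  unfold c; split
  · rw [map_neg]; rfl
  · rw [neg_zero]

lemma c_zero (k : ℕ) : S.c k (0 : L) = 0 := by
  unfold c; split
  · rw [map_zero]; rfl
  · rfl

lemma repr_e (k : ℕ) (hk : 1 ≤ k) :
    S.B.repr (S.e k) = Finsupp.single (ix k hk) 1 := by
  rw [← S.hBe k hk]; exact S.B.repr_self _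

lemma repr_x : S.B.repr S.x = Finsupp.single (Sum.inl ()) 1 := by
  rw [← S.hBx]; exact S.B.repr_self _

lemma repr_y : S.B.repr S.y = Finsupp.single (Sum.inr (Sum.inl ())) 1 := by
  rw [← S.hBy]; exact S.B.repr_self _

/-! coefficients of `⁅v, e 1⁆` -/

lemma b1_inl (v : L) : S.B.repr ⁅v, S.e 1⁆ (Sum.inl ()) = 0 := by
  rw [show ⁅v, S.e 1⁆ = rmul (S.e 1) v from rfl, key]
  refine Finset.sum_eq_zero ?_
  rintro (⟨⟩|⟨⟩|⟨k,hk⟩) -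
  · rw [rmul_apply, S.hBx, S.hx1, map_neg, S.repr_e 1 le_rfl]; simp
  · rw [rmul_apply, S.hBy, S.hy1, map_zero]; simp
  · rw [rmul_apply, S.hBe k hk]
    rcases Nat.lt_or_ge k 2 with h2 | h2
    · have hk1 : k = 1 := by omega
      subst hk1; rw [lie_self, map_zero]; simp
    · rw [S.hbr k h2, S.repr_e (k+1) (by omega)]; simp

lemma b1_inry (v : L) : S.B.repr ⁅v, S.e 1⁆ (Sum.inr (Sum.inl ())) = 0 := by
  rw [show ⁅v, S.e 1⁆ = rmul (S.e 1) v from rfl, key]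
  refine Finset.sum_eq_zero ?_
  rintro (⟨⟩|⟨⟩|⟨k,hk⟩) -
  · rw [rmul_apply, S.hBx, S.hx1, map_neg, S.repr_e 1 le_rfl]; simp
  · rw [rmul_apply, S.hBy, S.hy1, map_zero]; simp
  · rw [rmul_apply, S.hBe k hk]
    rcases Nat.lt_or_ge k 2 with h2 | h2
    · have hk1 : k = 1 := by omega
      subst hk1; rw [lie_self, map_zero]; simp
    · rw [S.hbr k h2, S.repr_e (k+1) (by omega)]; simp

lemma b1_1 (v : L) :
    S.c 1 ⁅v, S.e 1⁆ = -(S.B.repr v (Sum.inl ())) := by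
  rw [S.c_apply 1 le_rfl,
    show ⁅v, S.e 1⁆ = rmul (S.e 1) v from rfl, key, Finset.sum_eq_single (Sum.inl ())]
  · rw [rmul_apply, S.hBx, S.hx1, map_neg, S.repr_e 1 le_rfl]
    simp [single_ix_ix, mul_comm]
  · rintro (⟨⟩|⟨⟩|⟨k,hk⟩) - hne
    · exact absurd rfl hne
    · rw [rmul_apply, S.hBy, S.hy1, map_zero]; simp
    · rw [rmul_apply, S.hBe k hk]
      rcases Nat.lt_or_ge k 2 with h2 | h2
      · have hk1 : k = 1 := by omega
        subst hk1; rw [lie_self, map_zero]; simp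
      · rw [S.hbr k h2, S.repr_e (k+1) (by omega), single_ix_ix,
          if_neg (by omega), mul_zero]
  · intro h; rw [Finsupp.notMem_support_iff.mp h, zero_mul]

lemma b1_2 (v : L) : S.c 2 ⁅v, S.e 1⁆ = 0 := by
  rw [S.c_apply 2 (by omega),
    show ⁅v, S.e 1⁆ = rmul (S.e 1) v from rfl, key]
  refine Finset.sum_eq_zero ?_
  rintro (⟨⟩|⟨⟩|⟨k,hk⟩) -
  · rw [rmul_apply, S.hBx, S.hx1, map_neg, S.repr_e 1 le_rfl]
    simp [single_ix_ix]
  · rw [rmul_apply, S.hBy, S.hy1, map_zero]; simp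
  · rw [rmul_apply, S.hBe k hk]
    rcases Nat.lt_or_ge k 2 with h2 | h2
    · have hk1 : k = 1 := by omega
      subst hk1; rw [lie_self, map_zero]; simp
    · rw [S.hbr k h2, S.repr_e (k+1) (by omega), single_ix_ix,
        if_neg (by omega), mul_zero]

lemma b1_succ (v : L) (k : ℕ) (hk : 2 ≤ k) :
    S.c (k+1) ⁅v, S.e 1⁆ = S.c k v := by
  rw [S.c_apply (k+1) (by omega), S.c_apply k (by omega),
    show ⁅v, S.e 1⁆ = rmul (S.e 1) v from rfl, key,
    Finset.sum_eq_single (ix k (by omega : 1 ≤ k))]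
  · rw [rmul_apply, show S.B (ix k _) = S.e k from S.hBe k (by omega), S.hbr k hk,
      S.repr_e (k+1) (by omega), single_ix_ix, if_pos rfl, mul_one]
  · rintro (⟨⟩|⟨⟩|⟨m,hm⟩) - hne
    · rw [rmul_apply, S.hBx, S.hx1, map_neg, S.repr_e 1 le_rfl, Finsupp.neg_apply,
        single_ix_ix, if_neg (by omega), neg_zero, mul_zero]
    · rw [rmul_apply, S.hBy, S.hy1, map_zero]; simp
    · rw [rmul_apply, S.hBe m hm]
      rcases Nat.lt_or_ge m 2 with h2 | h2
      · have hm1 : m = 1 := by omega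
        subst hm1; rw [lie_self, map_zero]; simp
      · rw [S.hbr m h2, S.repr_e (m+1) (by omega), single_ix_ix,
          if_neg (fun hmk => hne ((ix_eq_iff m k hm (by omega)).mpr (by omega))), mul_zero]
  · intro h; rw [Finsupp.notMem_support_iff.mp h, zero_mul]


lemma yx_zero : ⁅S.y, S.x⁆ = 0 := by
  rw [← neg_eq_zero, lie_skew, S.hxy]

lemma e1e2 : ⁅S.e 1, S.e 2⁆ = -S.e 3 := by
  rw [← lie_skew, S.hbr 2 le_rfl]

lemma ex (i : ℕ) (hi : 2 ≤ i) : ⁅S.e i, S.x⁆ = (((i : ℂ)) - 1) • S.e i := by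
  rw [← lie_skew, S.hxi i hi, neg_smul, neg_neg]

lemma ey (i : ℕ) (hi : 2 ≤ i) : ⁅S.e i, S.y⁆ = S.e i := by
  rw [← lie_skew, S.hyi i hi, neg_neg]

/-! coefficients of `⁅x, v⁆` -/

lemma x_inl (v : L) : S.B.repr ⁅S.x, v⁆ (Sum.inl ()) = 0 := by
  rw [show ⁅S.x, v⁆ = lmul S.x v from rfl, key]
  refine Finset.sum_eq_zero ?_
  rintro (⟨⟩|⟨⟩|⟨k,hk⟩) -
  · rw [lmul_apply, S.hBx, lie_self, map_zero]; simp
  · rw [lmul_apply, S.hBy, S.hxy, map_zero]; simp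
  · rw [lmul_apply, S.hBe k hk]
    rcases Nat.lt_or_ge k 2 with h2 | h2
    · have hk1 : k = 1 := by omega
      subst hk1; rw [S.hx1, map_neg, S.repr_e 1 le_rfl, Finsupp.neg_apply]; simp
    · rw [S.hxi k h2, map_smul, S.repr_e k (by omega), Finsupp.smul_apply,
        single_ix_inl, smul_zero, mul_zero]

lemma x_inry (v : L) : S.B.repr ⁅S.x, v⁆ (Sum.inr (Sum.inl ())) = 0 := by
  rw [show ⁅S.x, v⁆ = lmul S.x v from rfl, key]
  refine Finset.sum_eq_zero ?_
  rintro (⟨⟩|⟨⟩|⟨k,hk⟩) -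
  · rw [lmul_apply, S.hBx, lie_self, map_zero]; simp
  · rw [lmul_apply, S.hBy, S.hxy, map_zero]; simp
  · rw [lmul_apply, S.hBe k hk]
    rcases Nat.lt_or_ge k 2 with h2 | h2
    · have hk1 : k = 1 := by omega
      subst hk1; rw [S.hx1, map_neg, S.repr_e 1 le_rfl, Finsupp.neg_apply]; simp
    · rw [S.hxi k h2, map_smul, S.repr_e k (by omega), Finsupp.smul_apply,
        single_ix_inry, smul_zero, mul_zero]

lemma x_1 (v : L) : S.c 1 ⁅S.x, v⁆ = -(S.c 1 v) := by
  rw [S.c_apply 1 le_rfl, S.c_apply 1 le_rfl,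
    show ⁅S.x, v⁆ = lmul S.x v from rfl, key, Finset.sum_eq_single (ix 1 le_rfl)]
  · rw [lmul_apply, show S.B (ix 1 _) = S.e 1 from S.hBe 1 le_rfl, S.hx1, map_neg,
      S.repr_e 1 le_rfl, Finsupp.neg_apply, single_ix_ix, if_pos rfl]
    ring
  · rintro (⟨⟩|⟨⟩|⟨k,hk⟩) - hne
    · rw [lmul_apply, S.hBx, lie_self, map_zero]; simp
    · rw [lmul_apply, S.hBy, S.hxy, map_zero]; simp
    · rw [lmul_apply, S.hBe k hk]
      have h2 : 2 ≤ k := by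
        rcases Nat.lt_or_ge k 2 with h2 | h2
        · exact absurd ((ix_eq_iff k 1 hk le_rfl).mpr (by omega)) hne
        · exact h2
      rw [S.hxi k h2, map_smul, S.repr_e k (by omega), Finsupp.smul_apply,
        single_ix_ix, if_neg (by omega), smul_zero, mul_zero]
  · intro h; rw [Finsupp.notMem_support_iff.mp h, zero_mul]

lemma x_k (v : L) (k : ℕ) (hk : 2 ≤ k) :
    S.c k ⁅S.x, v⁆ = -(((k : ℂ)) - 1) * S.c k v := by
  rw [S.c_apply k (by omega), S.c_apply k (by omega),
    show ⁅S.x, v⁆ = lmul S.x v from rfl, key,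
    Finset.sum_eq_single (ix k (by omega : 1 ≤ k))]
  · rw [lmul_apply, show S.B (ix k _) = S.e k from S.hBe k (by omega), S.hxi k hk,
      map_smul, S.repr_e k (by omega), Finsupp.smul_apply, single_ix_ix, if_pos rfl]
    show _ * (_ * 1) = _
    ring
  · rintro (⟨⟩|⟨⟩|⟨m,hm⟩) - hne
    · rw [lmul_apply, S.hBx, lie_self, map_zero]; simp
    · rw [lmul_apply, S.hBy, S.hxy, map_zero]; simp
    · rw [lmul_apply, S.hBe m hm]
      rcases Nat.lt_or_ge m 2 with h2 | h2
      · have hm1 : m = 1 := by omega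
        subst hm1
        rw [S.hx1, map_neg, S.repr_e 1 le_rfl, Finsupp.neg_apply, single_ix_ix,
          if_neg (by omega), neg_zero, mul_zero]
      · rw [S.hxi m h2, map_smul, S.repr_e m (by omega), Finsupp.smul_apply,
          single_ix_ix,
          if_neg (fun hmk => hne ((ix_eq_iff m k hm (by omega)).mpr hmk)),
          smul_zero, mul_zero]
  · intro h; rw [Finsupp.notMem_support_iff.mp h, zero_mul]

/-! coefficients of `⁅y, v⁆` -/

lemma y_inl (v : L) : S.B.repr ⁅S.y, v⁆ (Sum.inl ()) = 0 := by
  rw [show ⁅S.y, v⁆ = lmul S.y v from rfl, key]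
  refine Finset.sum_eq_zero ?_
  rintro (⟨⟩|⟨⟩|⟨k,hk⟩) -
  · rw [lmul_apply, S.hBx, S.yx_zero, map_zero]; simp
  · rw [lmul_apply, S.hBy, lie_self, map_zero]; simp
  · rw [lmul_apply, S.hBe k hk]
    rcases Nat.lt_or_ge k 2 with h2 | h2
    · have hk1 : k = 1 := by omega
      subst hk1; rw [S.hy1, map_zero]; simp
    · rw [S.hyi k h2, map_neg, S.repr_e k (by omega), Finsupp.neg_apply]; simp

lemma y_inry (v : L) : S.B.repr ⁅S.y, v⁆ (Sum.inr (Sum.inl ())) = 0 := by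
  rw [show ⁅S.y, v⁆ = lmul S.y v from rfl, key]
  refine Finset.sum_eq_zero ?_
  rintro (⟨⟩|⟨⟩|⟨k,hk⟩) -
  · rw [lmul_apply, S.hBx, S.yx_zero, map_zero]; simp
  · rw [lmul_apply, S.hBy, lie_self, map_zero]; simp
  · rw [lmul_apply, S.hBe k hk]
    rcases Nat.lt_or_ge k 2 with h2 | h2
    · have hk1 : k = 1 := by omega
      subst hk1; rw [S.hy1, map_zero]; simp
    · rw [S.hyi k h2, map_neg, S.repr_e k (by omega), Finsupp.neg_apply]; simp

lemma y_1 (v : L) : S.c 1 ⁅S.y, v⁆ = 0 := by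
  rw [S.c_apply 1 le_rfl, show ⁅S.y, v⁆ = lmul S.y v from rfl, key]
  refine Finset.sum_eq_zero ?_
  rintro (⟨⟩|⟨⟩|⟨k,hk⟩) -
  · rw [lmul_apply, S.hBx, S.yx_zero, map_zero]; simp
  · rw [lmul_apply, S.hBy, lie_self, map_zero]; simp
  · rw [lmul_apply, S.hBe k hk]
    rcases Nat.lt_or_ge k 2 with h2 | h2
    · have hk1 : k = 1 := by omega
      subst hk1; rw [S.hy1, map_zero]; simp
    · rw [S.hyi k h2, map_neg, S.repr_e k (by omega), Finsupp.neg_apply, single_ix_ix,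
        if_neg (by omega), neg_zero, mul_zero]

lemma y_k (v : L) (k : ℕ) (hk : 2 ≤ k) :
    S.c k ⁅S.y, v⁆ = -(S.c k v) := by
  rw [S.c_apply k (by omega), S.c_apply k (by omega),
    show ⁅S.y, v⁆ = lmul S.y v from rfl, key,
    Finset.sum_eq_single (ix k (by omega : 1 ≤ k))]
  · rw [lmul_apply, show S.B (ix k _) = S.e k from S.hBe k (by omega), S.hyi k hk,
      map_neg, S.repr_e k (by omega), Finsupp.neg_apply, single_ix_ix, if_pos rfl]
    ring
  · rintro (⟨⟩|⟨⟩|⟨m,hm⟩) - hne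
    · rw [lmul_apply, S.hBx, S.yx_zero, map_zero]; simp
    · rw [lmul_apply, S.hBy, lie_self, map_zero]; simp
    · rw [lmul_apply, S.hBe m hm]
      rcases Nat.lt_or_ge m 2 with h2 | h2
      · have hm1 : m = 1 := by omega
        subst hm1; rw [S.hy1, map_zero]; simp
      · rw [S.hyi m h2, map_neg, S.repr_e m (by omega), Finsupp.neg_apply, single_ix_ix,
          if_neg (fun hmk => hne ((ix_eq_iff m k hm (by omega)).mpr hmk)),
          neg_zero, mul_zero]
  · intro h; rw [Finsupp.notMem_support_iff.mp h, zero_mul]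

/-! coefficients of `⁅v, e 2⁆` -/

lemma b2_inl (v : L) : S.B.repr ⁅v, S.e 2⁆ (Sum.inl ()) = 0 := by
  rw [show ⁅v, S.e 2⁆ = rmul (S.e 2) v from rfl, key]
  refine Finset.sum_eq_zero ?_
  rintro (⟨⟩|⟨⟩|⟨k,hk⟩) -
  · rw [rmul_apply, S.hBx, S.hxi 2 le_rfl, map_smul, S.repr_e 2 (by omega),
      Finsupp.smul_apply, single_ix_inl, smul_zero, mul_zero]
  · rw [rmul_apply, S.hBy, S.hyi 2 le_rfl, map_neg, S.repr_e 2 (by omega),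
      Finsupp.neg_apply]; simp
  · rw [rmul_apply, S.hBe k hk]
    rcases Nat.lt_or_ge k 2 with h2 | h2
    · have hk1 : k = 1 := by omega
      subst hk1; rw [S.e1e2, map_neg, S.repr_e 3 (by omega), Finsupp.neg_apply]; simp
    · rw [S.hzero k 2 (by omega) (by omega) (by omega) (by omega), map_zero]; simp

lemma b2_inry (v : L) : S.B.repr ⁅v, S.e 2⁆ (Sum.inr (Sum.inl ())) = 0 := by
  rw [show ⁅v, S.e 2⁆ = rmul (S.e 2) v from rfl, key]
  refine Finset.sum_eq_zero ?_
  rintro (⟨⟩|⟨⟩|⟨k,hk⟩) -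
  · rw [rmul_apply, S.hBx, S.hxi 2 le_rfl, map_smul, S.repr_e 2 (by omega),
      Finsupp.smul_apply, single_ix_inry, smul_zero, mul_zero]
  · rw [rmul_apply, S.hBy, S.hyi 2 le_rfl, map_neg, S.repr_e 2 (by omega),
      Finsupp.neg_apply]; simp
  · rw [rmul_apply, S.hBe k hk]
    rcases Nat.lt_or_ge k 2 with h2 | h2
    · have hk1 : k = 1 := by omega
      subst hk1; rw [S.e1e2, map_neg, S.repr_e 3 (by omega), Finsupp.neg_apply]; simp
    · rw [S.hzero k 2 (by omega) (by omega) (by omega) (by omega), map_zero]; simp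

lemma b2_1 (v : L) : S.c 1 ⁅v, S.e 2⁆ = 0 := by
  rw [S.c_apply 1 le_rfl, show ⁅v, S.e 2⁆ = rmul (S.e 2) v from rfl, key]
  refine Finset.sum_eq_zero ?_
  rintro (⟨⟩|⟨⟩|⟨k,hk⟩) -
  · rw [rmul_apply, S.hBx, S.hxi 2 le_rfl, map_smul, S.repr_e 2 (by omega),
      Finsupp.smul_apply, single_ix_ix, if_neg (by omega), smul_zero, mul_zero]
  · rw [rmul_apply, S.hBy, S.hyi 2 le_rfl, map_neg, S.repr_e 2 (by omega),
      Finsupp.neg_apply, single_ix_ix, if_neg (by omega), neg_zero, mul_zero]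
  · rw [rmul_apply, S.hBe k hk]
    rcases Nat.lt_or_ge k 2 with h2 | h2
    · have hk1 : k = 1 := by omega
      subst hk1
      rw [S.e1e2, map_neg, S.repr_e 3 (by omega), Finsupp.neg_apply, single_ix_ix,
        if_neg (by omega), neg_zero, mul_zero]
    · rw [S.hzero k 2 (by omega) (by omega) (by omega) (by omega), map_zero]; simp

lemma b2_2 (v : L) :
    S.c 2 ⁅v, S.e 2⁆
      = -(S.B.repr v (Sum.inl ())) - S.B.repr v (Sum.inr (Sum.inl ())) := by
  rw [S.c_apply 2 (by omega), show ⁅v, S.e 2⁆ = rmul (S.e 2) v from rfl, key,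
    sum_support_pair (S.B.repr v) _ (Sum.inl ()) (Sum.inr (Sum.inl ())) (by simp)]
  · rw [rmul_apply, rmul_apply, S.hBx, S.hBy, S.hxi 2 le_rfl, S.hyi 2 le_rfl,
      map_smul, map_neg, S.repr_e 2 (by omega), Finsupp.smul_apply, Finsupp.neg_apply,
      single_ix_ix, if_pos rfl]
    show _ * (-((2:ℂ) - 1) * 1) + _ * -1 = _
    ring
  · rintro (⟨⟩|⟨⟩|⟨k,hk⟩) h1 h2
    · exact absurd rfl h1
    · exact absurd rfl h2
    · rw [rmul_apply, S.hBe k hk]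
      rcases Nat.lt_or_ge k 2 with hlt | hge
      · have hk1 : k = 1 := by omega
        subst hk1
        rw [S.e1e2, map_neg, S.repr_e 3 (by omega), Finsupp.neg_apply, single_ix_ix,
          if_neg (by omega), neg_zero, mul_zero]
      · rw [S.hzero k 2 (by omega) (by omega) (by omega) (by omega), map_zero]; simp
  · intro i hi; rw [hi, zero_mul]

lemma b2_3 (v : L) : S.c 3 ⁅v, S.e 2⁆ = -(S.c 1 v) := by
  rw [S.c_apply 3 (by omega), S.c_apply 1 le_rfl,
    show ⁅v, S.e 2⁆ = rmul (S.e 2) v from rfl, key,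
    Finset.sum_eq_single (ix 1 le_rfl)]
  · rw [rmul_apply, show S.B (ix 1 _) = S.e 1 from S.hBe 1 le_rfl, S.e1e2, map_neg,
      S.repr_e 3 (by omega), Finsupp.neg_apply, single_ix_ix, if_pos rfl]
    ring
  · rintro (⟨⟩|⟨⟩|⟨k,hk⟩) - hne
    · rw [rmul_apply, S.hBx, S.hxi 2 le_rfl, map_smul, S.repr_e 2 (by omega),
        Finsupp.smul_apply, single_ix_ix, if_neg (by omega), smul_zero, mul_zero]
    · rw [rmul_apply, S.hBy, S.hyi 2 le_rfl, map_neg, S.repr_e 2 (by omega),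
        Finsupp.neg_apply, single_ix_ix, if_neg (by omega), neg_zero, mul_zero]
    · rw [rmul_apply, S.hBe k hk]
      rcases Nat.lt_or_ge k 2 with h2 | h2
      · have hk1 : k = 1 := by omega
        subst hk1; exact absurd rfl hne
      · rw [S.hzero k 2 (by omega) (by omega) (by omega) (by omega), map_zero]; simp
  · intro h; rw [Finsupp.notMem_support_iff.mp h, zero_mul]

lemma b2_k (v : L) (k : ℕ) (hk : 4 ≤ k) : S.c k ⁅v, S.e 2⁆ = 0 := by
  rw [S.c_apply k (by omega), show ⁅v, S.e 2⁆ = rmul (S.e 2) v from rfl, key]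
  refine Finset.sum_eq_zero ?_
  rintro (⟨⟩|⟨⟩|⟨m,hm⟩) -
  · rw [rmul_apply, S.hBx, S.hxi 2 le_rfl, map_smul, S.repr_e 2 (by omega),
      Finsupp.smul_apply, single_ix_ix, if_neg (by omega), smul_zero, mul_zero]
  · rw [rmul_apply, S.hBy, S.hyi 2 le_rfl, map_neg, S.repr_e 2 (by omega),
      Finsupp.neg_apply, single_ix_ix, if_neg (by omega), neg_zero, mul_zero]
  · rw [rmul_apply, S.hBe m hm]
    rcases Nat.lt_or_ge m 2 with h2 | h2
    · have hm1 : m = 1 := by omega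
      subst hm1
      rw [S.e1e2, map_neg, S.repr_e 3 (by omega), Finsupp.neg_apply, single_ix_ix,
        if_neg (by omega), neg_zero, mul_zero]
    · rw [S.hzero m 2 (by omega) (by omega) (by omega) (by omega), map_zero]; simp

/-! `⁅e i, v⁆` elementwise -/

lemma lie_ei (v : L) (i : ℕ) (hi : 2 ≤ i) :
    ⁅S.e i, v⁆
      = (((i : ℂ) - 1) * S.B.repr v (Sum.inl ())
          + S.B.repr v (Sum.inr (Sum.inl ()))) • S.e i
        + (S.c 1 v) • S.e (i + 1) := by
  rw [show ⁅S.e i, v⁆ = lmul (S.e i) v from rfl, keyE,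
    sum_support_triple (S.B.repr v) _ (Sum.inl ()) (Sum.inr (Sum.inl ())) (ix 1 le_rfl)
      (by simp) (by simp [ix]) (by simp [ix])]
  · rw [lmul_apply, lmul_apply, lmul_apply, S.hBx, S.hBy,
      show S.B (ix 1 _) = S.e 1 from S.hBe 1 le_rfl,
      S.ex i hi, S.ey i hi, S.hbr i hi, S.c_apply 1 le_rfl]
    module
  · rintro (⟨⟩|⟨⟩|⟨m,hm⟩) h1 h2 h3
    · exact absurd rfl h1
    · exact absurd rfl h2
    · have h2m : 2 ≤ m := by
        rcases Nat.lt_or_ge m 2 with hlt | hge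
        · exact absurd ((ix_eq_iff m 1 hm le_rfl).mpr (by omega) : _ = ix 1 le_rfl) h3
        · exact hge
      rw [lmul_apply, S.hBe m hm,
        S.hzero i m (by omega) (by omega) (by omega) (by omega), smul_zero]
  · intro i' hi'; rw [hi', zero_smul]

/-! reconstruction -/

lemma recon (v : L) (m : ℕ) (h0 : S.B.repr v (Sum.inl ()) = 0)
    (h1 : S.B.repr v (Sum.inr (Sum.inl ())) = 0)
    (h2 : ∀ k, m < k → S.c k v = 0) :
    v = ∑ k ∈ Finset.Icc 1 m, S.c k v • S.e k := by
  apply S.B.repr.injective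
  ext j
  rw [map_sum, Finset.sum_apply']
  obtain (⟨⟩|⟨⟩|⟨k0,hk0⟩) := j
  · rw [h0]; symm
    refine Finset.sum_eq_zero fun k hkm => ?_
    have hk1 : 1 ≤ k := (Finset.mem_Icc.mp hkm).1
    rw [map_smul, S.repr_e k hk1, Finsupp.smul_apply, single_ix_inl, smul_zero]
  · rw [h1]; symm
    refine Finset.sum_eq_zero fun k hkm => ?_
    have hk1 : 1 ≤ k := (Finset.mem_Icc.mp hkm).1
    rw [map_smul, S.repr_e k hk1, Finsupp.smul_apply, single_ix_inry, smul_zero]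
  · have hix : (Sum.inr (Sum.inr ⟨k0, hk0⟩) : Idx) = ix k0 hk0 := rfl
    rw [hix]
    by_cases hk : k0 ≤ m
    · rw [Finset.sum_eq_single k0]
      · rw [map_smul, S.repr_e k0 hk0, Finsupp.smul_apply, single_ix_ix, if_pos rfl,
          smul_eq_mul, mul_one, S.c_apply k0 hk0]
      · intro k hkm hne
        have hk1 : 1 ≤ k := (Finset.mem_Icc.mp hkm).1
        rw [map_smul, S.repr_e k hk1, Finsupp.smul_apply, single_ix_ix, if_neg hne,
          smul_zero]
      · intro hnot
        exact absurd (Finset.mem_Icc.mpr ⟨hk0, hk⟩) hnot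
    · rw [← S.c_apply k0 hk0, h2 k0 (by omega)]; symm
      refine Finset.sum_eq_zero fun k hkm => ?_
      have hkm' := Finset.mem_Icc.mp hkm
      rw [map_smul, S.repr_e k hkm'.1, Finsupp.smul_apply, single_ix_ix,
        if_neg (by omega), smul_zero]

end Setup
end
end M0TildeAux


open M0TildeAux


/-- Every derivation of the Lie algebra M̃₀ has the form
d(e₁) = α₁e₁ + Σ_{i=3}^n αᵢeᵢ, d(eᵢ) = ((i−2)α₁+β₂)eᵢ + β₃e_{i+1} (i ≥ 2),
d(x) = −β₃e₁ + Σ_{i=2}^{n−1}(i−1)α_{i+1}eᵢ, d(y) = Σ_{i=2}^{n−1} α_{i+1}eᵢ. -/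
theorem M0Tilde_derivation_form
    (L : Type*) [LieRing L] [LieAlgebra ℂ L] (x y : L) (e : ℕ → L)
    (hind : LinearIndependent ℂ
      (Sum.elim (fun _ : Unit => x)
        (Sum.elim (fun _ : Unit => y) (fun i : {n : ℕ // 1 ≤ n} => e i.1))))
    (hspan : Submodule.span ℂ (Set.range
      (Sum.elim (fun _ : Unit => x)
        (Sum.elim (fun _ : Unit => y) (fun i : {n : ℕ // 1 ≤ n} => e i.1)))) = ⊤)
    (hbr : ∀ i, 2 ≤ i → ⁅e i, e 1⁆ = e (i + 1))
    (hzero : ∀ i j, 1 ≤ i → 1 ≤ j → i ≠ 1 → j ≠ 1 → ⁅e i, e j⁆ = 0)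
    (hx1 : ⁅x, e 1⁆ = -e 1)
    (hxi : ∀ i, 2 ≤ i → ⁅x, e i⁆ = (-(((i : ℂ)) - 1)) • e i)
    (hyi : ∀ i, 2 ≤ i → ⁅y, e i⁆ = -e i)
    (hy1 : ⁅y, e 1⁆ = 0)
    (hxy : ⁅x, y⁆ = 0)
    (d : Module.End ℂ L)
    (hd : ∀ a b : L, d ⁅a, b⁆ = ⁅d a, b⁆ + ⁅a, d b⁆) :
    ∃ (n : ℕ) (α : ℕ → ℂ) (β₂ β₃ : ℂ),
      d (e 1) = α 1 • e 1 + ∑ i ∈ Finset.Icc 3 n, α i • e i ∧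
      (∀ i, 2 ≤ i → d (e i) = (((i : ℂ) - 2) * α 1 + β₂) • e i + β₃ • e (i + 1)) ∧
      d x = (-β₃) • e 1 + ∑ i ∈ Finset.Icc 2 (n - 1), (((i : ℂ) - 1) * α (i + 1)) • e i ∧
      d y = ∑ i ∈ Finset.Icc 2 (n - 1), α (i + 1) • e i := by
  classical
  obtain ⟨B, hB⟩ : ∃ B : Module.Basis Idx ℂ L,
      ∀ i, B i = (Sum.elim (fun _ : Unit => x)
        (Sum.elim (fun _ : Unit => y) (fun i : {n : ℕ // 1 ≤ n} => e i.1))) i :=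
    ⟨Module.Basis.mk hind (by rw [hspan]), fun i => Module.Basis.mk_apply _ _ i⟩
  let S : Setup L :=
    ⟨x, y, e, B, hB (Sum.inl ()), hB (Sum.inr (Sum.inl ())),
      fun k hk => hB (Sum.inr (Sum.inr ⟨k, hk⟩)), hbr, hzero, hx1, hxi, hyi, hy1, hxy⟩
  -- derivation equations
  have E1 : ⁅d S.y, S.e 1⁆ + ⁅S.y, d (S.e 1)⁆ = 0 := by
    have h := hd y (e 1); rw [hy1, map_zero] at h; exact h.symm
  have E2 : ⁅d S.x, S.e 1⁆ + ⁅S.x, d (S.e 1)⁆ = -(d (S.e 1)) := by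
    have h := hd x (e 1); rw [hx1, map_neg] at h; exact h.symm
  have E3 : ⁅d S.y, S.e 2⁆ + ⁅S.y, d (S.e 2)⁆ = -(d (S.e 2)) := by
    have h := hd y (e 2); rw [hyi 2 le_rfl, map_neg] at h; exact h.symm
  have E4 : ⁅d S.x, S.e 2⁆ + ⁅S.x, d (S.e 2)⁆ = -(d (S.e 2)) := by
    have h := hd x (e 2)
    rw [hxi 2 le_rfl, map_smul, show (-((((2:ℕ)):ℂ) - 1)) = -1 by norm_num,
      neg_one_smul] at h
    exact h.symm
  have E5 : ∀ i, 2 ≤ i → d (S.e (i+1)) = ⁅d (S.e i), S.e 1⁆ + ⁅S.e i, d (S.e 1)⁆ := by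
    intro i hi
    have h := hd (e i) (e 1); rw [hbr i hi] at h; exact h
  -- coefficient facts
  have F1 : S.B.repr (d S.y) (Sum.inl ()) = 0 := by
    have h := congrArg (S.c 1) E1
    rw [S.c_add, S.b1_1, S.y_1, S.c_zero] at h
    linear_combination -h
  have F2 : S.c 2 (d (S.e 1)) = 0 := by
    have h := congrArg (S.c 2) E1
    rw [S.c_add, S.b1_2, S.y_k _ 2 le_rfl, S.c_zero] at h
    linear_combination -h
  have F3 : ∀ k, 2 ≤ k → S.c k (d S.y) = S.c (k+1) (d (S.e 1)) := by
    intro k hk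
    have h := congrArg (S.c (k+1)) E1
    rw [S.c_add, S.b1_succ _ k hk, S.y_k _ (k+1) (by omega), S.c_zero] at h
    linear_combination h
  have F4 : S.B.repr (d (S.e 1)) (Sum.inl ()) = 0 := by
    have h := congrArg (fun v : L => S.B.repr v (Sum.inl ())) E2
    simp only [map_add, Finsupp.add_apply, map_neg, Finsupp.neg_apply] at h
    rw [S.b1_inl, S.x_inl] at h
    linear_combination h
  have F5 : S.B.repr (d (S.e 1)) (Sum.inr (Sum.inl ())) = 0 := by
    have h := congrArg (fun v : L => S.B.repr v (Sum.inr (Sum.inl ()))) E2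
    simp only [map_add, Finsupp.add_apply, map_neg, Finsupp.neg_apply] at h
    rw [S.b1_inry, S.x_inry] at h
    linear_combination h
  have F6 : S.B.repr (d S.x) (Sum.inl ()) = 0 := by
    have h := congrArg (S.c 1) E2
    rw [S.c_add, S.b1_1, S.x_1, S.c_neg] at h
    linear_combination -h
  have F7 : ∀ k, 2 ≤ k → S.c k (d S.x) = (((k:ℂ)) - 1) * S.c (k+1) (d (S.e 1)) := by
    intro k hk
    have h := congrArg (S.c (k+1)) E2
    rw [S.c_add, S.b1_succ _ k hk, S.x_k _ (k+1) (by omega), S.c_neg] at h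
    push_cast at h ⊢
    linear_combination h
  have F8 : S.B.repr (d (S.e 2)) (Sum.inl ()) = 0 := by
    have h := congrArg (fun v : L => S.B.repr v (Sum.inl ())) E3
    simp only [map_add, Finsupp.add_apply, map_neg, Finsupp.neg_apply] at h
    rw [S.b2_inl, S.y_inl] at h
    linear_combination h
  have F9 : S.B.repr (d (S.e 2)) (Sum.inr (Sum.inl ())) = 0 := by
    have h := congrArg (fun v : L => S.B.repr v (Sum.inr (Sum.inl ()))) E3
    simp only [map_add, Finsupp.add_apply, map_neg, Finsupp.neg_apply] at h
    rw [S.b2_inry, S.y_inry] at h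
    linear_combination h
  have F10 : S.c 1 (d (S.e 2)) = 0 := by
    have h := congrArg (S.c 1) E3
    rw [S.c_add, S.b2_1, S.y_1, S.c_neg] at h
    linear_combination h
  have F11 : S.B.repr (d S.y) (Sum.inr (Sum.inl ())) = 0 := by
    have h := congrArg (S.c 2) E3
    rw [S.c_add, S.b2_2, S.y_k _ 2 le_rfl, S.c_neg] at h
    linear_combination -h - F1
  have F12 : S.c 1 (d S.y) = 0 := by
    have h := congrArg (S.c 3) E3
    rw [S.c_add, S.b2_3, S.y_k _ 3 (by omega), S.c_neg] at h
    linear_combination -h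
  have F13 : S.B.repr (d S.x) (Sum.inr (Sum.inl ())) = 0 := by
    have h := congrArg (S.c 2) E4
    rw [S.c_add, S.b2_2, S.x_k _ 2 le_rfl, S.c_neg] at h
    push_cast at h
    linear_combination -h - F6
  have F14 : S.c 1 (d S.x) = -(S.c 3 (d (S.e 2))) := by
    have h := congrArg (S.c 3) E4
    rw [S.c_add, S.b2_3, S.x_k _ 3 (by omega), S.c_neg] at h
    push_cast at h
    linear_combination -h
  have F15 : ∀ k, 4 ≤ k → S.c k (d (S.e 2)) = 0 := by
    intro k hk
    have h := congrArg (S.c k) E4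
    rw [S.c_add, S.b2_k _ k hk, S.x_k _ k (by omega), S.c_neg] at h
    have hk2 : ((k:ℂ)) - 2 ≠ 0 := by
      have : (k:ℂ) ≠ 2 := by exact_mod_cast (by omega : k ≠ 2)
      exact sub_ne_zero.mpr this
    have hmul : (((k:ℂ)) - 2) * S.c k (d (S.e 2)) = 0 := by linear_combination -h
    exact (mul_eq_zero.mp hmul).resolve_left hk2
  -- d e₂ and the general d eᵢ
  have de2 : d (S.e 2) = S.c 2 (d (S.e 2)) • S.e 2 + S.c 3 (d (S.e 2)) • S.e 3 := by
    have hr := S.recon (d (S.e 2)) 3 F8 F9 (fun k hk => F15 k (by omega))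
    rw [show Finset.Icc 1 3 = {1, 2, 3} from rfl,
      Finset.sum_insert (by decide), Finset.sum_insert (by decide),
      Finset.sum_singleton, F10, zero_smul, zero_add] at hr
    exact hr
  have hde : ∀ i, 2 ≤ i → d (S.e i)
      = (((i:ℂ) - 2) * S.c 1 (d (S.e 1)) + S.c 2 (d (S.e 2))) • S.e i
        + S.c 3 (d (S.e 2)) • S.e (i+1) := by
    intro i hi
    induction i, hi using Nat.le_induction with
    | base =>
      rw [show (2:ℕ)+1 = 3 from rfl, show ((((2:ℕ)):ℂ) - 2) * S.c 1 (d (S.e 1))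
        + S.c 2 (d (S.e 2)) = S.c 2 (d (S.e 2)) by push_cast; ring]
      exact de2
    | succ i hi ih =>
      rw [E5 i hi, ih, S.lie_ei (d (S.e 1)) i hi, F4, F5, add_lie, smul_lie, smul_lie,
        S.hbr i hi, S.hbr (i+1) (by omega)]
      push_cast
      module
  -- the bound n
  set g : Idx → ℕ := Sum.elim (fun _ => 0) (Sum.elim (fun _ => 0) (fun s => s.1)) with hg
  set n : ℕ := 3 ⊔ (S.B.repr (d (S.e 1))).support.sup g with hn
  have hn3 : 3 ≤ n := le_max_left _ _
  have hα0 : ∀ k, n < k → S.c k (d (S.e 1)) = 0 := by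
    intro k hk
    have hk1 : 1 ≤ k := by omega
    rw [S.c_apply k hk1]
    by_contra hne
    have hmem : ix k hk1 ∈ (S.B.repr (d (S.e 1))).support :=
      Finsupp.mem_support_iff.mpr hne
    have hle : g (ix k hk1) ≤ (S.B.repr (d (S.e 1))).support.sup g :=
      Finset.le_sup hmem
    have hgk : g (ix k hk1) = k := rfl
    have hsupn : (S.B.repr (d (S.e 1))).support.sup g ≤ n := le_max_right _ _
    omega
  -- reconstructions
  have hde1sum : d (S.e 1) = S.c 1 (d (S.e 1)) • S.e 1
      + ∑ i ∈ Finset.Icc 3 n, S.c i (d (S.e 1)) • S.e i := by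
    have hr := S.recon (d (S.e 1)) n F4 F5 hα0
    rw [show Finset.Icc 1 n = insert 1 (insert 2 (Finset.Icc 3 n)) by
        ext a; simp only [Finset.mem_Icc, Finset.mem_insert]; omega,
      Finset.sum_insert (by simp), Finset.sum_insert (by simp),
      F2, zero_smul, zero_add] at hr
    exact hr
  have hdxsum : d S.x = -(S.c 3 (d (S.e 2))) • S.e 1
      + ∑ i ∈ Finset.Icc 2 (n-1), (((i:ℂ) - 1) * S.c (i+1) (d (S.e 1))) • S.e i := by
    have hr := S.recon (d S.x) (n-1) F6 F13 (fun k hk => by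
      have hk2 : 2 ≤ k := by omega
      rw [F7 k hk2, hα0 (k+1) (by omega), mul_zero])
    rw [show Finset.Icc 1 (n-1) = insert 1 (Finset.Icc 2 (n-1)) by
        ext a; simp only [Finset.mem_Icc, Finset.mem_insert]; omega,
      Finset.sum_insert (by simp), F14] at hr
    refine hr.trans ?_
    congr 1
    refine Finset.sum_congr rfl fun i hi => ?_
    rw [F7 i (Finset.mem_Icc.mp hi).1]
  have hdysum : d S.y = ∑ i ∈ Finset.Icc 2 (n-1), S.c (i+1) (d (S.e 1)) • S.e i := by
    have hr := S.recon (d S.y) (n-1) F1 F11 (fun k hk => by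
      have hk2 : 2 ≤ k := by omega
      rw [F3 k hk2, hα0 (k+1) (by omega)])
    rw [show Finset.Icc 1 (n-1) = insert 1 (Finset.Icc 2 (n-1)) by
        ext a; simp only [Finset.mem_Icc, Finset.mem_insert]; omega,
      Finset.sum_insert (by simp), F12, zero_smul, zero_add] at hr
    refine hr.trans ?_
    refine Finset.sum_congr rfl fun i hi => ?_
    rw [F3 i (Finset.mem_Icc.mp hi).1]
  exact ⟨n, fun k => S.c k (d (S.e 1)), S.c 2 (d (S.e 2)), S.c 3 (d (S.e 2)),
    hde1sum, hde, hdxsum, hdysum⟩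
end

section
/- Every derivation of the Lie algebra M̃₂ is inner. In particular, M̃₂ is complete (trivial center and all derivations inner). -/
/-- Every derivation of the Lie algebra M̃₂ is inner; in particular M̃₂ is
complete (trivial center and all derivations inner). -/
theorem M2Tilde_complete
    (L : Type*) [LieRing L] [LieAlgebra ℂ L] (x : L) (e : ℕ → L)
    (hind : LinearIndependent ℂ
      (Sum.elim (fun _ : Unit => x) (fun i : {n : ℕ // 1 ≤ n} => e i.1)))
    (hspan : Submodule.span ℂ (Set.range
      (Sum.elim (fun _ : Unit => x) (fun i : {n : ℕ // 1 ≤ n} => e i.1))) = ⊤)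
    (hbr1 : ∀ i, 2 ≤ i → ⁅e 1, e i⁆ = e (i + 1))
    (hbr2 : ∀ j, 3 ≤ j → ⁅e 2, e j⁆ = e (j + 2))
    (hzero : ∀ i j, 3 ≤ i → 3 ≤ j → ⁅e i, e j⁆ = 0)
    (hx1 : ⁅x, e 1⁆ = -e 1)
    (hxi : ∀ i, 2 ≤ i → ⁅x, e i⁆ = (-(i : ℂ)) • e i) :
    (∀ d : Module.End ℂ L, (∀ a b : L, d ⁅a, b⁆ = ⁅d a, b⁆ + ⁅a, d b⁆) →
      ∃ c : L, ∀ b : L, d b = ⁅c, b⁆) ∧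
    LieAlgebra.center ℂ L = ⊥ := by
  let B : Module.Basis (Unit ⊕ {n : ℕ // 1 ≤ n}) ℂ L := Module.Basis.mk hind (by rw [hspan])
  have hB1 : B (Sum.inl ()) = x := by simp [B, Module.Basis.mk_apply]
  have hBr : ∀ (i : ℕ) (h : 1 ≤ i), B (Sum.inr ⟨i, h⟩) = e i := by
    intro i h; simp [B, Module.Basis.mk_apply]
  set W : (Unit ⊕ {n : ℕ // 1 ≤ n}) → ℂ :=
    Sum.elim (fun _ => 0) (fun i => -(i.1 : ℂ)) with hW
  -- uniform bracket
  have hx : ∀ i, 1 ≤ i → ⁅x, e i⁆ = (-(i : ℂ)) • e i := by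
    intro i hi
    rcases eq_or_lt_of_le hi with h | h
    · subst h; simpa using hx1
    · exact hxi i h
  have hxr : ∀ i, 1 ≤ i → ⁅e i, x⁆ = (i : ℂ) • e i := by
    intro i hi
    rw [← lie_skew, hx i hi, neg_smul, neg_neg]
  -- repr of ⁅x, v⁆
  have key : ∀ j, (B.coord j).comp (LieAlgebra.ad ℂ L x : L →ₗ[ℂ] L)
      = W j • B.coord j := by
    intro j
    apply B.ext
    rintro (⟨⟩ | ⟨i, hi⟩)
    · rcases j with ⟨⟩ | j
      · simp [hB1, Module.Basis.coord_apply, LieAlgebra.ad_apply, hW]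
      · simp only [LinearMap.coe_comp, Function.comp_apply, LieHom.coe_toLinearMap,
          LieAlgebra.ad_apply, hB1, lie_self, map_zero, Finsupp.coe_zero, Pi.zero_apply,
          LinearMap.smul_apply, Module.Basis.coord_apply]
        rw [← hB1, Module.Basis.repr_self]
        simp [Finsupp.single_apply]
    · simp only [LinearMap.coe_comp, Function.comp_apply, LieHom.coe_toLinearMap,
        LieAlgebra.ad_apply, hBr i hi, hx i hi, LinearMap.smul_apply, Module.Basis.coord_apply,
        map_smul, map_neg]
      rw [← hBr i hi, Module.Basis.repr_self]
      rcases eq_or_ne j (Sum.inr ⟨i, hi⟩) with h | h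
      · subst h; simp [hW]
      · simp [Finsupp.single_eq_of_ne' (Ne.symm h)]
  have reprBr : ∀ (v : L) j, B.repr ⁅x, v⁆ j = W j * B.repr v j := by
    intro v j
    have := LinearMap.congr_fun (key j) v
    simpa [Module.Basis.coord_apply, LieAlgebra.ad_apply] using this
  -- eigenvector lemma
  have eig : ∀ (μ : ℂ) (j₀ : Unit ⊕ {n : ℕ // 1 ≤ n}) (v : L), ⁅x, v⁆ = μ • v →
      (∀ j, j ≠ j₀ → W j ≠ μ) → v = B.repr v j₀ • B j₀ := by
    intro μ j₀ v hv hne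
    have hco : ∀ j, j ≠ j₀ → B.repr v j = 0 := by
      intro j hj
      have h1 : W j * B.repr v j = μ * B.repr v j := by
        rw [← reprBr v j, hv, map_smul]; simp
      have := sub_eq_zero.mpr h1
      rw [← sub_mul] at this
      rcases mul_eq_zero.mp this with h | h
      · exact absurd (sub_eq_zero.mp h) (hne j hj)
      · exact h
    have hrepr : B.repr v = Finsupp.single j₀ (B.repr v j₀) := by
      ext j
      rcases eq_or_ne j j₀ with h | h
      · subst h; simp
      · rw [hco j h, Finsupp.single_eq_of_ne' (Ne.symm h)]
    apply B.repr.injective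
    rw [map_smul, Module.Basis.repr_self, Finsupp.smul_single, smul_eq_mul, mul_one]
    exact hrepr
  -- coefficient extraction
  have hcoe : ∀ (i : ℕ) (hi : 1 ≤ i) (a b : ℂ), a • e i = b • e i → a = b := by
    intro i hi a b h
    have := congrArg (fun v => B.repr v (Sum.inr ⟨i, hi⟩)) h
    simpa [← hBr i hi, Module.Basis.repr_self] using this
  constructor
  · -- every derivation is inner
    intro d hder
    -- Step 1 : the x-coefficient of d x vanishes
    set i1 : Unit ⊕ {n : ℕ // 1 ≤ n} := Sum.inr ⟨1, le_rfl⟩ with hi1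
    let Rb1 : L →ₗ[ℂ] L :=
      { toFun := fun v => ⁅v, e 1⁆
        map_add' := fun a b => add_lie a b (e 1)
        map_smul' := fun t a => smul_lie t a (e 1) }
    have key1 : (B.coord i1).comp Rb1 = -(B.coord (Sum.inl ())) := by
      apply B.ext
      rintro (⟨⟩ | ⟨i, hi⟩)
      · simp only [LinearMap.coe_comp, Function.comp_apply, hB1, Module.Basis.coord_apply,
          LinearMap.neg_apply]
        show B.repr ⁅x, e 1⁆ i1 = -(B.repr x (Sum.inl ()))
        rw [hx1, ← hBr 1 le_rfl, ← hB1, map_neg, Module.Basis.repr_self, Module.Basis.repr_self]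
        simp [hi1]
      · simp only [LinearMap.coe_comp, Function.comp_apply, hBr i hi, Module.Basis.coord_apply,
          LinearMap.neg_apply]
        show B.repr ⁅e i, e 1⁆ i1 = -(B.repr (e i) (Sum.inl ()))
        rcases eq_or_lt_of_le hi with h | h
        · subst h
          rw [lie_self, ← hBr 1 le_rfl, map_zero, Module.Basis.repr_self]
          simp
        · rw [← lie_skew, hbr1 i h, ← hBr i hi, ← hBr (i+1) (by omega), map_neg,
            Module.Basis.repr_self, Module.Basis.repr_self]
          have h1 : (Sum.inr ⟨i+1, by omega⟩ : Unit ⊕ {n : ℕ // 1 ≤ n}) ≠ i1 := by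
            rw [hi1]
            intro hcon
            have := Subtype.mk.injEq .. ▸ (Sum.inr.injEq .. ▸ hcon)
            omega
          have h2 : (Sum.inr ⟨i, hi⟩ : Unit ⊕ {n : ℕ // 1 ≤ n}) ≠ Sum.inl () := by simp
          simp [Finsupp.single_eq_of_ne' h1, Finsupp.single_eq_of_ne' h2]
    have hα : B.repr (d x) (Sum.inl ()) = 0 := by
      have h := hder x (e 1)
      rw [hx1, map_neg] at h
      have h2 := congrArg (fun v => B.repr v i1) h
      simp only [map_neg, map_add, Finsupp.neg_apply, Finsupp.add_apply] at h2
      have h3 : B.repr ⁅d x, e 1⁆ i1 = -(B.repr (d x) (Sum.inl ())) :=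
        LinearMap.congr_fun key1 (d x)
      rw [h3, reprBr (d (e 1))] at h2
      have h4 : W i1 = -1 := by simp only [hW, hi1, Sum.elim_inr]; norm_num
      rw [h4] at h2
      linear_combination h2
    -- Step 2 : subtract an inner derivation killing d x
    set F : (Unit ⊕ {n : ℕ // 1 ≤ n}) →₀ ℂ := B.repr (d x) with hF
    set g : (Unit ⊕ {n : ℕ // 1 ≤ n}) → ℂ → L :=
      fun j β => Sum.elim (fun _ => (0:L)) (fun i => (β / (i.1 : ℂ)) • e i.1) j with hg
    set c' : L := F.sum g with hc'
    let Rbx : L →ₗ[ℂ] L :=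
      { toFun := fun v => ⁅v, x⁆
        map_add' := fun a b => add_lie a b x
        map_smul' := fun t a => smul_lie t a x }
    have hcx : ⁅c', x⁆ = d x := by
      have h1 : ⁅c', x⁆ = F.sum fun j β => ⁅g j β, x⁆ := by
        show Rbx (F.sum g) = _
        exact map_finsuppSum Rbx F g
      have h2 : F.sum (fun j β => ⁅g j β, x⁆) = F.sum fun j β => β • B j := by
        apply Finsupp.sum_congr
        rintro (⟨⟩ | ⟨i, hi⟩) hj
        · exact absurd hα (Finsupp.mem_support_iff.mp hj)
        · show ⁅(F _ / (i : ℂ)) • e i, x⁆ = F _ • B (Sum.inr ⟨i, hi⟩)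
          rw [hBr i hi, smul_lie, hxr i hi, smul_smul,
            div_mul_cancel₀ _ (by exact_mod_cast Nat.one_le_iff_ne_zero.mp hi : (i:ℂ) ≠ 0)]
      have h3 : F.sum (fun j β => β • B j) = d x := by
        conv_rhs => rw [← B.linearCombination_repr (d x)]
        rw [Finsupp.linearCombination_apply]
      rw [h1, h2, h3]
    set D1 : Module.End ℂ L := d - (LieAlgebra.ad ℂ L c') with hD1def
    have hD1 : ∀ b, D1 b = d b - ⁅c', b⁆ := by
      intro b; simp [hD1def, LieAlgebra.ad_apply]
    have hD1x : D1 x = 0 := by rw [hD1, hcx, sub_self]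
    have hLeib : ∀ a b : L, D1 ⁅a, b⁆ = ⁅D1 a, b⁆ + ⁅a, D1 b⁆ := by
      intro a b
      rw [hD1, hD1, hD1, hder a b, sub_lie, lie_sub, leibniz_lie c' a b]
      abel
    -- Step 3 : D1 is diagonal
    have hdiag : ∀ (i : ℕ) (hi : 1 ≤ i),
        D1 (e i) = B.repr (D1 (e i)) (Sum.inr ⟨i, hi⟩) • e i := by
      intro i hi
      have h := hLeib x (e i)
      rw [hD1x, zero_lie, zero_add, hx i hi, map_smul] at h
      have h2 : ⁅x, D1 (e i)⁆ = (-(i : ℂ)) • D1 (e i) := h.symm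
      have h3 := eig (-(i : ℂ)) (Sum.inr ⟨i, hi⟩) (D1 (e i)) h2 ?_
      · rw [hBr i hi] at h3; exact h3
      · rintro (⟨⟩ | ⟨k, hk⟩) hj
        · simp only [hW, Sum.elim_inl, ne_eq, zero_eq_neg, Nat.cast_eq_zero]
          omega
        · simp only [hW, Sum.elim_inr, ne_eq, neg_inj, Nat.cast_inj]
          intro hki; exact hj (by simp [hki])
    set lam : ℕ → ℂ :=
      fun i => if h : 1 ≤ i then B.repr (D1 (e i)) (Sum.inr ⟨i, h⟩) else 0 with hlamdef
    have hlam : ∀ (i : ℕ), 1 ≤ i → D1 (e i) = lam i • e i := by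
      intro i hi
      simp only [hlamdef, dif_pos hi]
      exact hdiag i hi
    -- Step 4 : recurrences for lam
    have hrec1 : ∀ i, 2 ≤ i → lam (i + 1) = lam 1 + lam i := by
      intro i hi
      have h := hLeib (e 1) (e i)
      rw [hbr1 i hi, hlam 1 le_rfl, hlam i (by omega), hlam (i+1) (by omega),
        smul_lie, lie_smul, hbr1 i hi, ← add_smul] at h
      exact hcoe (i+1) (by omega) _ _ h
    have hrec2 : lam 5 = lam 2 + lam 3 := by
      have h := hLeib (e 2) (e 3)
      rw [hbr2 3 le_rfl, hlam 2 (by omega), hlam 3 (by omega), hlam 5 (by omega),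
        smul_lie, lie_smul, hbr2 3 le_rfl, ← add_smul] at h
      exact hcoe 5 (by omega) _ _ h
    have h2l : lam 2 = 2 * lam 1 := by
      have h3 := hrec1 2 le_rfl
      have h4 := hrec1 3 (by omega)
      have h5 := hrec1 4 (by omega)
      linear_combination h5 + h4 - hrec2
    have hlin : ∀ i, 1 ≤ i → lam i = (i : ℂ) * lam 1 := by
      have h2 : ∀ i, 2 ≤ i → lam i = (i : ℂ) * lam 1 := by
        intro i hi
        induction i, hi using Nat.le_induction with
        | base => rw [h2l]; norm_num
        | succ n hn ih =>
          rw [hrec1 n hn, ih]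
          push_cast; ring
      intro i hi
      rcases eq_or_lt_of_le hi with h | h
      · subst h; norm_num
      · exact h2 i h
    -- Step 5 : conclusion
    refine ⟨c' + (-(lam 1)) • x, ?_⟩
    have hdc : d = LieAlgebra.ad ℂ L (c' + (-(lam 1)) • x) := by
      apply B.ext
      rintro (⟨⟩ | ⟨i, hi⟩)
      · rw [hB1]
        show d x = ⁅c' + (-(lam 1)) • x, x⁆
        rw [add_lie, smul_lie, lie_self, smul_zero, add_zero, hcx]
      · rw [hBr i hi]
        show d (e i) = ⁅c' + (-(lam 1)) • x, e i⁆
        have h1 : d (e i) = lam i • e i + ⁅c', e i⁆ := by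
          rw [← hlam i hi, hD1, sub_add_cancel]
        rw [h1, add_lie, smul_lie, hx i hi, smul_smul, hlin i hi, add_comm]
        congr 2
        ring
    intro b
    rw [hdc, LieAlgebra.ad_apply]
  · -- center is trivial
    rw [eq_bot_iff]
    intro a ha
    have hab : ∀ b : L, ⁅b, a⁆ = 0 := (LieModule.mem_maxTrivSubmodule ℂ L L a).mp ha
    have h0 : ⁅x, a⁆ = (0 : ℂ) • a := by rw [zero_smul]; exact hab x
    have ha2 := eig 0 (Sum.inl ()) a h0 ?_
    · rw [hB1] at ha2
      have h1 : ⁅e 1, a⁆ = 0 := hab (e 1)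
      rw [ha2, lie_smul, ← lie_skew, hx1, neg_neg] at h1
      have h2 : B.repr a (Sum.inl ()) • e 1 = (0 : ℂ) • e 1 := by rw [zero_smul]; exact h1
      have h3 := hcoe 1 le_rfl _ _ h2
      rw [LieSubmodule.mem_bot, ha2, h3, zero_smul]
    · rintro (⟨⟩ | j) hj
      · exact absurd rfl hj
      · simp only [hW, Sum.elim_inr, ne_eq, neg_eq_zero, Nat.cast_eq_zero]
        exact Nat.one_le_iff_ne_zero.mp j.2
end

section
/- The 2-cocycle φ on M̃₂ defined by φ(e₃, e_j) = e_{j+3} and φ(e₂, e_j) = (4−j) e_{j+2} for j ≥ 5 (zero on other basis pairs) is not a coboundary: there is no linear map f : M̃₂ → M̃₂ with φ(a, b) = [f(a), b] + [a, f(b)] − f([a, b]) for all a, b ∈ M̃₂. Consequently H²(M̃₂, M̃₂) ≠ 0. -/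
/-- The 2-cocycle φ on M̃₂ given by φ(e₃,e_j) = e_{j+3} and
φ(e₂,e_j) = (4−j)e_{j+2} for j ≥ 5 (zero on all other pairs of basis elements) is a
not a coboundary; hence H²(M̃₂, M̃₂) ≠ 0. -/
theorem M2Tilde_phi_not_coboundary
    (L : Type*) [LieRing L] [LieAlgebra ℂ L] (x : L) (e : ℕ → L)
    (hind : LinearIndependent ℂ
      (Sum.elim (fun _ : Unit => x) (fun i : {n : ℕ // 1 ≤ n} => e i.1)))
    (hspan : Submodule.span ℂ (Set.range
      (Sum.elim (fun _ : Unit => x) (fun i : {n : ℕ // 1 ≤ n} => e i.1))) = ⊤)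
    (hbr1 : ∀ i, 2 ≤ i → ⁅e 1, e i⁆ = e (i + 1))
    (hbr2 : ∀ j, 3 ≤ j → ⁅e 2, e j⁆ = e (j + 2))
    (hzero : ∀ i j, 3 ≤ i → 3 ≤ j → ⁅e i, e j⁆ = 0)
    (hx1 : ⁅x, e 1⁆ = -e 1)
    (hxi : ∀ i, 2 ≤ i → ⁅x, e i⁆ = (-(i : ℂ)) • e i)
    (φ : L →ₗ[ℂ] L →ₗ[ℂ] L)
    (halt : ∀ a : L, φ a a = 0)
    (h3j : ∀ j, 5 ≤ j → φ (e 3) (e j) = e (j + 3))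
    (h2j : ∀ j, 5 ≤ j → φ (e 2) (e j) = ((4 : ℂ) - (j : ℂ)) • e (j + 2))
    (hxe : ∀ i, 1 ≤ i → φ x (e i) = 0)
    (hrest : ∀ i j, 1 ≤ i → 1 ≤ j → ¬(i = 3 ∧ 5 ≤ j) → ¬(j = 3 ∧ 5 ≤ i) →
      ¬(i = 2 ∧ 5 ≤ j) → ¬(j = 2 ∧ 5 ≤ i) → φ (e i) (e j) = 0) :
    ¬ ∃ f : L →ₗ[ℂ] L, ∀ a b : L, φ a b = ⁅f a, b⁆ + ⁅a, f b⁆ - f ⁅a, b⁆ := by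
  rintro ⟨f, hf⟩
  set v : Unit ⊕ {n : ℕ // 1 ≤ n} → L :=
    Sum.elim (fun _ : Unit => x) (fun i : {n : ℕ // 1 ≤ n} => e i.1) with hv
  set T : Submodule ℂ L := Submodule.span ℂ {e 3, e 4, e 5, e 6, e 7} with hT
  have he3 : e 3 ∈ T := Submodule.subset_span (by simp)
  have he4 : e 4 ∈ T := Submodule.subset_span (by simp)
  have he5 : e 5 ∈ T := Submodule.subset_span (by simp)
  have he6 : e 6 ∈ T := Submodule.subset_span (by simp)
  have he7 : e 7 ∈ T := Submodule.subset_span (by simp)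
  -- every right-bracket with e 5 lands in T
  have hA : ∀ w : L, ⁅w, e 5⁆ ∈ T := by
    intro w
    have hw : w ∈ Submodule.span ℂ (Set.range v) := by rw [hspan]; trivial
    induction hw using Submodule.span_induction with
    | mem z hz =>
      obtain ⟨i, rfl⟩ := hz
      cases i with
      | inl u =>
        show ⁅x, e 5⁆ ∈ T
        rw [hxi 5 (by norm_num)]
        exact T.smul_mem _ he5
      | inr i =>
        obtain ⟨k, hk⟩ := i
        show ⁅e k, e 5⁆ ∈ T
        rcases Nat.lt_or_ge k 3 with h | h
        · interval_cases k
          · rw [hbr1 5 (by norm_num)]; exact he6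
          · rw [hbr2 5 (by norm_num)]; exact he7
        · rw [hzero k 5 h (by norm_num)]; exact T.zero_mem
    | zero => rw [zero_lie]; exact T.zero_mem
    | add a b _ _ ha hb => rw [add_lie]; exact T.add_mem ha hb
    | smul c a _ ha => rw [smul_lie]; exact T.smul_mem c ha
  -- every left-bracket with e 3 lands in T
  have hB : ∀ w : L, ⁅e 3, w⁆ ∈ T := by
    intro w
    have hw : w ∈ Submodule.span ℂ (Set.range v) := by rw [hspan]; trivial
    induction hw using Submodule.span_induction with
    | mem z hz =>
      obtain ⟨i, rfl⟩ := hz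
      cases i with
      | inl u =>
        show ⁅e 3, x⁆ ∈ T
        rw [← lie_skew, hxi 3 (by norm_num)]
        exact T.neg_mem (T.smul_mem _ he3)
      | inr i =>
        obtain ⟨k, hk⟩ := i
        show ⁅e 3, e k⁆ ∈ T
        rcases Nat.lt_or_ge k 3 with h | h
        · interval_cases k
          · rw [← lie_skew, hbr1 3 (by norm_num)]; exact T.neg_mem he4
          · rw [← lie_skew, hbr2 3 (by norm_num)]; exact T.neg_mem he5
        · rw [hzero 3 k (by norm_num) h]; exact T.zero_mem
    | zero => rw [lie_zero]; exact T.zero_mem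
    | add a b _ _ ha hb => rw [lie_add]; exact T.add_mem ha hb
    | smul c a _ ha => rw [lie_smul]; exact T.smul_mem c ha
  have key : e 8 ∈ T := by
    have h1 := hf (e 3) (e 5)
    rw [h3j 5 (by norm_num), hzero 3 5 (by norm_num) (by norm_num), map_zero,
      sub_zero] at h1
    rw [h1]
    exact T.add_mem (hA _) (hB _)
  -- contradiction with linear independence
  set s : Set (Unit ⊕ {n : ℕ // 1 ≤ n}) :=
    Sum.inr '' {i : {n : ℕ // 1 ≤ n} | 3 ≤ i.1 ∧ i.1 ≤ 7} with hs
  have hnotmem : (Sum.inr ⟨8, by norm_num⟩ : Unit ⊕ {n : ℕ // 1 ≤ n}) ∉ s := by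
    rintro ⟨i, hi, hieq⟩
    have : i = ⟨8, by norm_num⟩ := Sum.inr_injective hieq
    subst this
    exact absurd hi.2 (by decide)
  have hnot : e 8 ∉ Submodule.span ℂ (v '' s) := by
    have := hind.notMem_span_image (s := s) hnotmem
    exact this
  apply hnot
  refine Submodule.span_le.mpr ?_ key
  intro z hz
  have : ∀ k : ℕ, (hk1 : 1 ≤ k) → 3 ≤ k → k ≤ 7 → e k ∈ v '' s := by
    intro k hk1 hk3 hk7
    exact ⟨Sum.inr ⟨k, hk1⟩, ⟨⟨k, hk1⟩, ⟨hk3, hk7⟩, rfl⟩, rfl⟩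
  rcases hz with rfl | rfl | rfl | rfl | rfl
  · exact Submodule.subset_span (this 3 (by norm_num) (by norm_num) (by norm_num))
  · exact Submodule.subset_span (this 4 (by norm_num) (by norm_num) (by norm_num))
  · exact Submodule.subset_span (this 5 (by norm_num) (by norm_num) (by norm_num))
  · exact Submodule.subset_span (this 6 (by norm_num) (by norm_num) (by norm_num))
  · exact Submodule.subset_span (this 7 (by norm_num) (by norm_num) (by norm_num))
end

section
/- In the Lie algebra M̃₀, the map ad_x restricted to the ideal spanned by {e₁, e₂, …} is not potentially nilpotent: ⋂_{k≥1} Im(ad_x^k) ≠ 0 (in fact every eᵢ lies in the image of all powers of ad_x). -/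
/-- In M̃₀ the operator ad_x restricted to the ideal spanned by the eᵢ is not
potentially nilpotent: every eᵢ lies in the image of every power of ad_x (with a preimage in
the span of the eᵢ), so ⋂_{k≥1} Im(ad_x^k) ≠ 0. -/
theorem M0Tilde_ad_x_not_potentially_nilpotent
    (L : Type*) [LieRing L] [LieAlgebra ℂ L] (x y : L) (e : ℕ → L)
    (hind : LinearIndependent ℂ
      (Sum.elim (fun _ : Unit => x)
        (Sum.elim (fun _ : Unit => y) (fun i : {n : ℕ // 1 ≤ n} => e i.1))))
    (hspan : Submodule.span ℂ (Set.range
      (Sum.elim (fun _ : Unit => x)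
        (Sum.elim (fun _ : Unit => y) (fun i : {n : ℕ // 1 ≤ n} => e i.1)))) = ⊤)
    (hbr : ∀ i, 2 ≤ i → ⁅e i, e 1⁆ = e (i + 1))
    (hzero : ∀ i j, 1 ≤ i → 1 ≤ j → i ≠ 1 → j ≠ 1 → ⁅e i, e j⁆ = 0)
    (hx1 : ⁅x, e 1⁆ = -e 1)
    (hxi : ∀ i, 2 ≤ i → ⁅x, e i⁆ = (-(((i : ℂ)) - 1)) • e i)
    (hyi : ∀ i, 2 ≤ i → ⁅y, e i⁆ = -e i)
    (hy1 : ⁅y, e 1⁆ = 0)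
    (hxy : ⁅x, y⁆ = 0) :
    (∀ k i : ℕ, 1 ≤ i →
      ∃ v ∈ Submodule.span ℂ (Set.range (fun i : {n : ℕ // 1 ≤ n} => e i.1)),
        ((LieAlgebra.ad ℂ L x) ^ k) v = e i) ∧
    ⨅ k : ℕ, LinearMap.range ((LieAlgebra.ad ℂ L x) ^ (k + 1)) ≠ ⊥ := by
  have hc : ∀ i : ℕ, 1 ≤ i → ∃ c : ℂ, c ≠ 0 ∧ (LieAlgebra.ad ℂ L x) (e i) = c • e i := by
    intro i hi
    rcases eq_or_lt_of_le hi with h1 | h2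
    · exact ⟨-1, by norm_num, by simp [LieAlgebra.ad_apply, ← h1, hx1]⟩
    · refine ⟨-(((i : ℂ)) - 1), ?_, by simpa [LieAlgebra.ad_apply] using hxi i h2⟩
      have hne : (i : ℂ) ≠ 1 := by exact_mod_cast (by omega : i ≠ 1)
      rw [neg_ne_zero, sub_ne_zero]; exact hne
  have key : ∀ k i : ℕ, 1 ≤ i →
      ∃ v ∈ Submodule.span ℂ (Set.range (fun i : {n : ℕ // 1 ≤ n} => e i.1)),
        ((LieAlgebra.ad ℂ L x) ^ k) v = e i := by
    intro k i hi
    obtain ⟨c, hc0, hce⟩ := hc i hi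
    have hpow : ∀ m : ℕ, ((LieAlgebra.ad ℂ L x) ^ m) (e i) = c ^ m • e i := by
      intro m; induction m with
      | zero => simp
      | succ m ih =>
        rw [pow_succ, Module.End.mul_apply, hce, map_smul, ih, smul_smul, ← pow_succ']
    refine ⟨(c⁻¹) ^ k • e i,
      Submodule.smul_mem _ _ (Submodule.subset_span ⟨⟨i, hi⟩, rfl⟩), ?_⟩
    rw [map_smul, hpow, smul_smul, ← mul_pow, inv_mul_cancel₀ hc0, one_pow, one_smul]
  refine ⟨key, ?_⟩
  intro h
  have he1 : e 1 ≠ 0 := by exact hind.ne_zero (Sum.inr (Sum.inr ⟨1, le_refl 1⟩))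
  have hmem : e 1 ∈ ⨅ k : ℕ, LinearMap.range ((LieAlgebra.ad ℂ L x) ^ (k + 1)) := by
    rw [Submodule.mem_iInf]
    intro k
    obtain ⟨v, _, hv⟩ := key (k + 1) 1 le_rfl
    exact ⟨v, hv⟩
  rw [h] at hmem
  exact he1 (by simpa using hmem)
end
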